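/- arXiv:0905.3705 — 5 statements merged into one kernel-verified Lean document; each statement's English description precedes it below -/
import Mathlib

section
/- Let F and G be smooth cubics in ℂ[X,Y,Z] whose common projective zero set consists of exactly nine distinct points p₁,…,p₉ of ℙ², with F and G meeting transversally at each of these points. Then the complex vector space of homogeneous degree-3 polynomials vanishing at all nine points p₁,…,p₉ is exactly the two-dimensional span of F and G. -/
open MvPolynomial

/-- The gradient of a polynomial in `ℂ[X,Y,Z]` at a point of `ℂ³`. -/
noncomputable def grad (F : MvPolynomial (Fin 3) ℂ) (v : Fin 3 → ℂ) : Fin 3 → ℂ :=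
  fun i => eval v (pderiv i F)

/-- A cubic: a nonzero homogeneous polynomial of degree 3 in `ℂ[X,Y,Z]`. -/
def IsCubic (F : MvPolynomial (Fin 3) ℂ) : Prop :=
  F ≠ 0 ∧ F.IsHomogeneous 3

/-- A smooth cubic: `(0,0,0)` is the only common zero in `ℂ³` of the three
partial derivatives. -/
def SmoothCubic (F : MvPolynomial (Fin 3) ℂ) : Prop :=
  IsCubic F ∧ ∀ v : Fin 3 → ℂ, grad F v = 0 → v = 0

/-- `F` and `G` meet transversally at (the projective point represented by) `v`:
their gradients at `v` are linearly independent over `ℂ`. -/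
def Transverse (F G : MvPolynomial (Fin 3) ℂ) (v : Fin 3 → ℂ) : Prop :=
  LinearIndependent ℂ ![grad F v, grad G v]

/-- Two nonzero vectors of `ℂ³` represent the same point of `ℙ²`. -/
def SameProjPt (u v : Fin 3 → ℂ) : Prop :=
  ∃ c : ℂ, c ≠ 0 ∧ c • u = v

/-- The common projective zero set of `F` and `G` consists of exactly the nine
distinct points of `ℙ²` represented by `p 0, …, p 8`. -/
def NinePoints (F G : MvPolynomial (Fin 3) ℂ) (p : Fin 9 → Fin 3 → ℂ) : Prop :=
  (∀ i, p i ≠ 0) ∧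
  (∀ i j, i ≠ j → ¬ SameProjPt (p i) (p j)) ∧
  (∀ i, eval (p i) F = 0 ∧ eval (p i) G = 0) ∧
  (∀ v : Fin 3 → ℂ, v ≠ 0 → eval v F = 0 → eval v G = 0 → ∃ i, SameProjPt (p i) v)



variable {σ : Type*} {R : Type*}

section Psi
variable [CommSemiring R]

/-- Map sending `X i ↦ (X i) * t`, exposing the homogeneous grading as a
polynomial in `t`. -/
noncomputable def psiH : MvPolynomial σ R →+* Polynomial (MvPolynomial σ R) :=
  eval₂Hom (Polynomial.C.comp C) (fun i => Polynomial.C (X i) * Polynomial.X)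

lemma psiH_monomial (d : σ →₀ ℕ) (c : R) :
    psiH (monomial d c) = Polynomial.C (monomial d c) * Polynomial.X ^ d.degree := by
  classical
  simp only [psiH, eval₂Hom_monomial, RingHom.coe_comp, Function.comp_apply]
  rw [Finsupp.prod]
  simp_rw [mul_pow, ← Polynomial.C_pow]
  rw [Finset.prod_mul_distrib, ← map_prod, Finset.prod_pow_eq_pow_sum]
  rw [monomial_eq, Finsupp.prod, Finsupp.degree_apply, map_mul]
  ring

lemma psiH_coeff (A : MvPolynomial σ R) (k : ℕ) :
    (psiH A).coeff k = homogeneousComponent k A := by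
  classical
  conv_lhs => rw [← support_sum_monomial_coeff A]
  conv_rhs => rw [← support_sum_monomial_coeff A]
  rw [map_sum, Polynomial.finset_sum_coeff, map_sum]
  refine Finset.sum_congr rfl fun d _ => ?_
  rw [psiH_monomial, Polynomial.coeff_C_mul, Polynomial.coeff_X_pow,
    homogeneousComponent_of_mem (isHomogeneous_monomial _ rfl)]
  by_cases h : k = d.degree <;> simp [h]

lemma psiH_ne_zero {A : MvPolynomial σ R} (hA : A ≠ 0) : psiH A ≠ 0 := by
  intro h
  apply hA
  rw [← sum_homogeneousComponent A]
  refine Finset.sum_eq_zero fun k _ => ?_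
  rw [← psiH_coeff, h, Polynomial.coeff_zero]

lemma psiH_of_isHomogeneous {A : MvPolynomial σ R} {n : ℕ} (hA : A.IsHomogeneous n) :
    psiH A = Polynomial.C A * Polynomial.X ^ n := by
  ext k
  rw [psiH_coeff, Polynomial.coeff_C_mul, Polynomial.coeff_X_pow,
    homogeneousComponent_of_mem ((mem_homogeneousSubmodule n A).2 hA)]
  by_cases h : k = n <;> simp [h]

end Psi

section Domain
variable [CommRing R] [IsDomain R]

/-- In a domain, factors of a homogeneous polynomial are homogeneous. -/
lemma isHomogeneous_of_mul_isHomogeneous {A B : MvPolynomial σ R} {n : ℕ}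
    (hA : A ≠ 0) (hB : B ≠ 0) (h : (A * B).IsHomogeneous n) :
    ∃ a b : ℕ, a + b = n ∧ A.IsHomogeneous a ∧ B.IsHomogeneous b := by
  classical
  have hAB : A * B ≠ 0 := mul_ne_zero hA hB
  have hψA : psiH A ≠ 0 := psiH_ne_zero hA
  have hψB : psiH B ≠ 0 := psiH_ne_zero hB
  have hmul : psiH A * psiH B = Polynomial.C (A * B) * Polynomial.X ^ n := by
    rw [← map_mul, psiH_of_isHomogeneous h]
  have hd : (psiH A).natDegree + (psiH B).natDegree = n := by
    have := Polynomial.natDegree_mul hψA hψB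
    rw [hmul] at this
    rw [← this, Polynomial.natDegree_C_mul_X_pow n (A*B) hAB]
  have ht : (psiH A).natTrailingDegree + (psiH B).natTrailingDegree = n := by
    have := Polynomial.natTrailingDegree_mul hψA hψB
    rw [hmul] at this
    rw [← this, Polynomial.C_mul_X_pow_eq_monomial, Polynomial.natTrailingDegree_monomial hAB]
  have hta : (psiH A).natTrailingDegree ≤ (psiH A).natDegree :=
    Polynomial.natTrailingDegree_le_natDegree _
  have htb : (psiH B).natTrailingDegree ≤ (psiH B).natDegree :=
    Polynomial.natTrailingDegree_le_natDegree _
  have hea : (psiH A).natTrailingDegree = (psiH A).natDegree := by omega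
  have heb : (psiH B).natTrailingDegree = (psiH B).natDegree := by omega
  have key : ∀ (P : MvPolynomial σ R) (m : ℕ), P ≠ 0 →
      (psiH P).natTrailingDegree = m → (psiH P).natDegree = m → P.IsHomogeneous m := by
    intro P m hP ht' hd'
    have hcomp : ∀ k, k ≠ m → homogeneousComponent k P = 0 := by
      intro k hk
      rw [← psiH_coeff]
      rcases lt_or_gt_of_ne hk with hlt | hgt
      · exact Polynomial.coeff_eq_zero_of_lt_natTrailingDegree (by omega)
      · exact Polynomial.coeff_eq_zero_of_natDegree_lt (by omega)
    have hPsum := sum_homogeneousComponent P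
    by_cases hmem : m < P.totalDegree + 1
    · have heq : homogeneousComponent m P = P := by
        conv_rhs => rw [← hPsum]
        exact (Finset.sum_eq_single_of_mem m (Finset.mem_range.2 hmem)
          (fun k _ hk => hcomp k hk)).symm
      have hh := homogeneousComponent_isHomogeneous m P
      rwa [heq] at hh
    · exfalso
      apply hP
      rw [← hPsum]
      refine Finset.sum_eq_zero fun k hkmem => ?_
      refine hcomp k fun hkeq => ?_
      rw [hkeq] at hkmem
      exact hmem (Finset.mem_range.1 hkmem)
  exact ⟨_, _, hd, key A _ hA hea rfl, key B _ hB heb rfl⟩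

end Domain



noncomputable section

abbrev R3 := MvPolynomial (Fin 3) ℂ

lemma homog_deg_eq {P : R3} {m n : ℕ} (h0 : P ≠ 0) (h1 : P.IsHomogeneous m)
    (h2 : P.IsHomogeneous n) : m = n := by
  rw [← h1.totalDegree h0, h2.totalDegree h0]

lemma degree_one_single {σ : Type*} (d : σ →₀ ℕ) (h : d.degree = 1) :
    ∃ i, d = Finsupp.single i 1 := by
  classical
  have hsum : ∑ a ∈ d.support, d a = 1 := h
  have hne : d.support.Nonempty := by
    rcases Finset.eq_empty_or_nonempty d.support with he | hne
    · rw [he] at hsum; simp at hsum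
    · exact hne
  obtain ⟨i, hi⟩ := hne
  have hdi : 1 ≤ d i := Nat.one_le_iff_ne_zero.2 (Finsupp.mem_support_iff.1 hi)
  have hsplit : d i + ∑ a ∈ d.support.erase i, d a = 1 := by
    rw [Finset.add_sum_erase _ _ hi]; exact hsum
  have hdi1 : d i = 1 := by omega
  have hrest : ∑ a ∈ d.support.erase i, d a = 0 := by omega
  refine ⟨i, ?_⟩
  ext j
  rcases eq_or_ne j i with rfl | hji
  · simp [hdi1]
  · rw [Finsupp.single_apply, if_neg (fun h : i = j => hji h.symm)]
    by_cases hjs : j ∈ d.support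
    · exact (Finset.sum_eq_zero_iff.1 hrest) j (Finset.mem_erase.2 ⟨hji, hjs⟩)
    · exact Finsupp.notMem_support_iff.1 hjs

lemma eval_linear {L : R3} (hL : L.IsHomogeneous 1) (v : Fin 3 → ℂ) :
    eval v L = ∑ i : Fin 3, coeff (Finsupp.single i 1) L * v i := by
  classical
  rw [eval_eq]
  have hsub : L.support ⊆ Finset.univ.image (fun i : Fin 3 => Finsupp.single i 1) := by
    intro d hd
    have hdeg : d.degree = 1 := by
      have := hL (mem_support_iff.1 hd)
      rwa [Pi.one_def, ← Finsupp.degree_eq_weight_one] at this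
    obtain ⟨i, rfl⟩ := degree_one_single d hdeg
    exact Finset.mem_image.2 ⟨i, Finset.mem_univ i, rfl⟩
  rw [Finset.sum_subset hsub (fun d _ hd => by
    rw [notMem_support_iff.1 hd, zero_mul])]
  rw [Finset.sum_image (fun a _ b _ hab => by
    exact Finsupp.single_left_injective one_ne_zero hab)]
  refine Finset.sum_congr rfl fun i _ => ?_
  congr 1
  rw [Finsupp.support_single_ne_zero i one_ne_zero]
  simp

lemma eval_linear_comb {L : R3} (hL : L.IsHomogeneous 1) (a : ℂ) (u w : Fin 3 → ℂ) :
    eval (a • u + w) L = a * eval u L + eval w L := by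
  rw [eval_linear hL, eval_linear hL, eval_linear hL, Finset.mul_sum, ← Finset.sum_add_distrib]
  refine Finset.sum_congr rfl fun i _ => ?_
  simp only [Pi.add_apply, Pi.smul_apply, smul_eq_mul]
  ring

lemma eval_smul_homog {P : R3} {n : ℕ} (hP : P.IsHomogeneous n) (c : ℂ) (v : Fin 3 → ℂ) :
    eval (c • v) P = c ^ n * eval v P := by
  classical
  rw [eval_eq, eval_eq, Finset.mul_sum]
  refine Finset.sum_congr rfl fun d hd => ?_
  have hdeg : d.degree = n := by
    have := hP (mem_support_iff.1 hd)
    rwa [Pi.one_def, ← Finsupp.degree_eq_weight_one] at this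
  have hsum : ∑ i ∈ d.support, d i = n := by rw [← hdeg]; rfl
  have : ∏ i ∈ d.support, (c • v) i ^ d i = c ^ n * ∏ i ∈ d.support, v i ^ d i := by
    simp only [Pi.smul_apply, smul_eq_mul, mul_pow]
    rw [Finset.prod_mul_distrib, Finset.prod_pow_eq_pow_sum, hsum]
  rw [this]; ring





/-- Substituting `X i ↦ u i • t + w i` into `Q`. -/
def lineSub (u w : Fin 3 → ℂ) : MvPolynomial (Fin 3) ℂ →ₐ[ℂ] Polynomial ℂ :=
  aeval (fun i => Polynomial.C (u i) * Polynomial.X + Polynomial.C (w i))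

lemma eval_lineSub (u w : Fin 3 → ℂ) (Q : R3) (s : ℂ) :
    Polynomial.eval s (lineSub u w Q) = eval (s • u + w) Q := by
  have : (Polynomial.evalRingHom s).comp ((lineSub u w : MvPolynomial (Fin 3) ℂ →ₐ[ℂ]
      Polynomial ℂ) : MvPolynomial (Fin 3) ℂ →+* Polynomial ℂ) = (eval (s • u + w)) := by
    apply ringHom_ext
    · intro r
      simp [lineSub]
    · intro i
      simp [lineSub]
      ring
  calc Polynomial.eval s (lineSub u w Q)
      = ((Polynomial.evalRingHom s).comp ((lineSub u w : MvPolynomial (Fin 3) ℂ →ₐ[ℂ]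
        Polynomial ℂ) : MvPolynomial (Fin 3) ℂ →+* Polynomial ℂ)) Q := rfl
    _ = eval (s • u + w) Q := by rw [this]

/-- A nonzero linear form and a positive-degree homogeneous polynomial have a
common nonzero zero. -/
lemma exists_common_zero {L Q : R3} (hL : L.IsHomogeneous 1) (hL0 : L ≠ 0)
    {q : ℕ} (hq : 1 ≤ q) (hQ : Q.IsHomogeneous q) :
    ∃ v : Fin 3 → ℂ, v ≠ 0 ∧ eval v L = 0 ∧ eval v Q = 0 := by
  classical
  -- the linear functional attached to L
  let φ : (Fin 3 → ℂ) →ₗ[ℂ] ℂ :=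
    { toFun := fun v => eval v L
      map_add' := by
        intro u w
        show eval (u + w) L = eval u L + eval w L
        have h := eval_linear_comb hL 1 u w
        rw [one_smul] at h
        rw [h, one_mul]
      map_smul' := by
        intro a u
        show eval (a • u) L = a • eval u L
        have h := eval_linear_comb hL a u 0
        rw [add_zero] at h
        have h0 : eval (0 : Fin 3 → ℂ) L = 0 := by
          rw [eval_linear hL]; simp
        rw [h, h0, add_zero, smul_eq_mul] }
  have hφsurj : Function.Surjective φ := by
    have hex : ∃ v, φ v ≠ 0 := by
      by_contra hcon
      push_neg at hcon
      exact hL0 (hL.eq_zero_of_forall_eval_eq_zero hcon)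
    obtain ⟨v₀, hv₀⟩ := hex
    intro t
    refine ⟨(t / φ v₀) • v₀, ?_⟩
    rw [map_smul, smul_eq_mul, div_mul_cancel₀ _ hv₀]
  have hker : Module.finrank ℂ (LinearMap.ker φ) = 2 := by
    have h1 := LinearMap.finrank_range_add_finrank_ker φ
    rw [LinearMap.range_eq_top.2 hφsurj, finrank_top] at h1
    simp only [Module.finrank_self] at h1
    have h3 : Module.finrank ℂ (Fin 3 → ℂ) = 3 := by
      simp [Module.finrank_pi]
    omega
  let b := Module.finBasisOfFinrankEq ℂ (LinearMap.ker φ) hker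
  set u : Fin 3 → ℂ := ((b 0 : LinearMap.ker φ) : Fin 3 → ℂ) with hu
  set w : Fin 3 → ℂ := ((b 1 : LinearMap.ker φ) : Fin 3 → ℂ) with hw
  have hLu : eval u L = 0 := (b 0).2
  have hLw : eval w L = 0 := (b 1).2
  have huw : ∀ s t : ℂ, s • u + t • w = 0 → s = 0 ∧ t = 0 := by
    have hli : LinearIndependent ℂ (fun i : Fin 2 => ((b i : LinearMap.ker φ) : Fin 3 → ℂ)) :=
      b.linearIndependent.map' (LinearMap.ker φ).subtype (Submodule.ker_subtype _)
    intro s t hst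
    have := Fintype.linearIndependent_iff.1 hli ![s, t] ?_
    · exact ⟨this 0, this 1⟩
    · rw [Fin.sum_univ_two]
      exact hst
  by_cases hroot : ∃ s : ℂ, Polynomial.eval s (lineSub u w Q) = 0
  · obtain ⟨s, hs⟩ := hroot
    refine ⟨s • u + w, ?_, ?_, ?_⟩
    · intro hzero
      have := huw s 1 (by rw [one_smul]; exact hzero)
      exact one_ne_zero this.2
    · rw [eval_linear_comb hL, hLu, hLw]; ring
    · rw [← eval_lineSub]; exact hs
  · -- no root: the substituted polynomial is a nonzero constant c
    push_neg at hroot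
    have hdeg : (lineSub u w Q).degree ≤ 0 := by
      by_contra hd
      push_neg at hd
      obtain ⟨z, hz⟩ := Complex.exists_root hd
      exact hroot z hz
    set c : ℂ := (lineSub u w Q).coeff 0 with hc
    have hP1 : lineSub u w Q = Polynomial.C c := Polynomial.eq_C_of_degree_le_zero hdeg
    -- now consider the swapped substitution
    have hswap : ∀ t : ℂ, t ≠ 0 →
        Polynomial.eval t (lineSub w u Q) = c * t ^ q := by
      intro t ht
      rw [eval_lineSub]
      have h1 : t • w + u = t • (t⁻¹ • u + w) := by
        rw [smul_add, smul_smul, mul_inv_cancel₀ ht, one_smul, add_comm]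
      rw [h1, eval_smul_homog hQ, ← eval_lineSub u w Q t⁻¹, hP1]
      rw [Polynomial.eval_C]
      ring
    have hpoly : lineSub w u Q = Polynomial.C c * Polynomial.X ^ q := by
      have hinf : {x : ℂ | (lineSub w u Q - Polynomial.C c * Polynomial.X ^ q).IsRoot x}.Infinite := by
        apply Set.Infinite.mono (s := {x : ℂ | x ≠ 0})
        · intro t ht
          simp only [Set.mem_setOf_eq, Polynomial.IsRoot, Polynomial.eval_sub,
            Polynomial.eval_mul, Polynomial.eval_C, Polynomial.eval_pow, Polynomial.eval_X]
          rw [hswap t ht, sub_self]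
        · exact (Set.finite_singleton 0).infinite_compl
      have := Polynomial.eq_zero_of_infinite_isRoot _ hinf
      rw [sub_eq_zero] at this
      exact this
    refine ⟨u, ?_, hLu, ?_⟩
    · intro hzero
      have := huw 1 0 (by rw [one_smul, zero_smul, add_zero]; exact hzero)
      exact one_ne_zero this.1
    · have := eval_lineSub w u Q 0
      rw [hpoly] at this
      simp only [Polynomial.eval_mul, Polynomial.eval_C, Polynomial.eval_pow,
        Polynomial.eval_X, zero_smul, zero_add] at this
      rw [← this, zero_pow (by omega : q ≠ 0), mul_zero]

end


section Irred
variable {F G : MvPolynomial (Fin 3) ℂ}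

lemma homog0_eq_C {P : R3} (h : P.IsHomogeneous 0) : P = C (coeff 0 P) := by
  have h1 := homogeneousComponent_of_mem (m := 0) ((mem_homogeneousSubmodule 0 P).2 h)
  rw [if_pos rfl] at h1
  calc P = homogeneousComponent 0 P := h1.symm
    _ = C (coeff 0 P) := homogeneousComponent_zero _

theorem smoothCubic_irreducible (hF : SmoothCubic F) : Irreducible F := by
  obtain ⟨⟨hF0, hF3⟩, hsm⟩ := hF
  constructor
  · intro hu
    obtain ⟨v, hv⟩ := hu.exists_right_inv
    have hv0 : v ≠ 0 := by rintro rfl; rw [mul_zero] at hv; exact one_ne_zero hv.symm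
    obtain ⟨a, b, hab, hFa, _⟩ := isHomogeneous_of_mul_isHomogeneous hF0 hv0
      (hv ▸ isHomogeneous_one (Fin 3) ℂ)
    have ha : a = 3 := homog_deg_eq hF0 hFa hF3
    omega
  · intro A B hAB
    by_contra hcon
    push_neg at hcon
    obtain ⟨hAu, hBu⟩ := hcon
    have hA0 : A ≠ 0 := by rintro rfl; rw [zero_mul] at hAB; exact hF0 hAB
    have hB0 : B ≠ 0 := by rintro rfl; rw [mul_zero] at hAB; exact hF0 hAB
    obtain ⟨a, b, hab, hA, hB⟩ := isHomogeneous_of_mul_isHomogeneous hA0 hB0 (hAB ▸ hF3)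
    have ha0 : a ≠ 0 := by
      rintro rfl
      refine hAu ?_
      rw [homog0_eq_C hA]
      exact (Ne.isUnit (fun h => hA0 (by rw [homog0_eq_C hA, h, map_zero]))).map
        (C : ℂ →+* R3)
    have hb0 : b ≠ 0 := by
      rintro rfl
      refine hBu ?_
      rw [homog0_eq_C hB]
      exact (Ne.isUnit (fun h => hB0 (by rw [homog0_eq_C hB, h, map_zero]))).map
        (C : ℂ →+* R3)
    have hcase : a = 1 ∨ b = 1 := by omega
    have key : ∀ v : Fin 3 → ℂ, eval v A = 0 → eval v B = 0 → v ≠ 0 → False := by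
      intro v hvA hvB hv0
      apply hv0
      apply hsm
      funext i
      show eval v (pderiv i F) = 0
      rw [hAB, pderiv_mul, map_add, map_mul, map_mul, hvA, hvB]
      ring
    rcases hcase with rfl | rfl
    · obtain ⟨v, hv0, hvA, hvB⟩ := exists_common_zero hA hA0 (by omega : 1 ≤ b) hB
      exact key v hvA hvB hv0
    · obtain ⟨v, hv0, hvB, hvA⟩ := exists_common_zero hB hB0 (by omega : 1 ≤ a) hA
      exact key v hvA hvB hv0

lemma not_F_dvd_G (hF : SmoothCubic F) (hG : SmoothCubic G) {v : Fin 3 → ℂ}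
    (htr : Transverse F G v) : ¬ F ∣ G := by
  rintro ⟨q, hq⟩
  have hF0 : F ≠ 0 := hF.1.1
  have hG0 : G ≠ 0 := hG.1.1
  have hq0 : q ≠ 0 := by rintro rfl; rw [mul_zero] at hq; exact hG0 hq
  obtain ⟨a, b, hab, hFa, hqb⟩ := isHomogeneous_of_mul_isHomogeneous hF0 hq0 (hq ▸ hG.1.2)
  have ha : a = 3 := homog_deg_eq hF0 hFa hF.1.2
  have hb : b = 0 := by omega
  subst hb
  have hqC : q = C (coeff 0 q) := homog0_eq_C hqb
  set c : ℂ := coeff 0 q with hc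
  have hgrad : ∀ i, grad G v i = c * grad F v i := by
    intro i
    show eval v (pderiv i G) = c * eval v (pderiv i F)
    rw [hq, hqC, pderiv_mul, pderiv_C, map_add, map_mul, map_mul]
    simp
    ring
  have := (LinearIndependent.pair_iff.1 htr c (-1) ?_).2
  · norm_num at this
  · funext i
    simp only [Pi.add_apply, Pi.smul_apply, smul_eq_mul, Pi.zero_apply, Pi.neg_apply]
    rw [hgrad i]
    ring

lemma relPrime_FG (hF : SmoothCubic F) (hG : SmoothCubic G) {v : Fin 3 → ℂ}
    (htr : Transverse F G v) : IsRelPrime F G := by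
  intro d hdF hdG
  obtain ⟨e, he⟩ := hdF
  rcases (smoothCubic_irreducible hF).isUnit_or_isUnit he with h | h
  · exact h
  · exfalso
    obtain ⟨ei, hei⟩ := h.exists_right_inv
    have hFd : F ∣ d := ⟨ei, by rw [he, mul_assoc, hei, mul_one]⟩
    exact not_F_dvd_G hF hG htr (dvd_trans hFd hdG)

end Irred


section Descent

/-- "Set the first variable to zero" ring hom. -/
noncomputable def eps (n : ℕ) : MvPolynomial (Fin (n+1)) ℂ →+* MvPolynomial (Fin n) ℂ :=
  (Polynomial.evalRingHom 0).comp (finSuccEquiv ℂ n).toAlgHom.toRingHom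

lemma eps_X_zero (n : ℕ) : eps n (X 0) = 0 := by
  simp [eps, finSuccEquiv_X_zero]

lemma eps_X_succ (n : ℕ) (j : Fin n) : eps n (X j.succ) = X j := by
  simp [eps, finSuccEquiv_X_succ]

lemma eps_C (n : ℕ) (c : ℂ) : eps n (C c) = C c := by
  simp [eps, finSuccEquiv_apply]

lemma X_zero_dvd_iff (n : ℕ) (P : MvPolynomial (Fin (n+1)) ℂ) :
    (X 0 ∣ P) ↔ eps n P = 0 := by
  constructor
  · rintro ⟨q, rfl⟩
    rw [map_mul, eps_X_zero, zero_mul]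
  · intro h
    have h0 : Polynomial.eval 0 (finSuccEquiv ℂ n P) = 0 := h
    have hdvd : Polynomial.X ∣ finSuccEquiv ℂ n P := by
      rw [Polynomial.X_dvd_iff, Polynomial.coeff_zero_eq_eval_zero]
      exact h0
    obtain ⟨q, hq⟩ := hdvd
    refine ⟨(finSuccEquiv ℂ n).symm q, ?_⟩
    apply (finSuccEquiv ℂ n).injective
    rw [map_mul, hq, AlgEquiv.apply_symm_apply, finSuccEquiv_X_zero]

lemma prime_X_zero (n : ℕ) : Prime (X 0 : MvPolynomial (Fin (n+1)) ℂ) := by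
  refine ⟨X_ne_zero _, ?_, ?_⟩
  · intro hu
    have := hu.map (eps n)
    rw [eps_X_zero] at this
    exact not_isUnit_zero this
  · intro a b hab
    rw [X_zero_dvd_iff] at hab
    rw [map_mul] at hab
    rcases mul_eq_zero.1 hab with h | h
    · exact Or.inl ((X_zero_dvd_iff n a).2 h)
    · exact Or.inr ((X_zero_dvd_iff n b).2 h)

lemma eps_rename (n : ℕ) (q : MvPolynomial (Fin n) ℂ) :
    eps n (rename Fin.succ q) = q := by
  have : (eps n).comp ((rename (Fin.succ : Fin n → Fin (n+1))).toRingHom) =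
      RingHom.id (MvPolynomial (Fin n) ℂ) := by
    apply ringHom_ext
    · intro r
      simp [eps_C]
    · intro i
      simp only [RingHom.coe_comp, Function.comp_apply, AlgHom.toRingHom_eq_coe,
        RingHom.coe_coe, rename_X, RingHom.id_apply]
      exact eps_X_succ n i
  calc eps n (rename Fin.succ q) = ((eps n).comp ((rename
      (Fin.succ : Fin n → Fin (n+1))).toRingHom)) q := rfl
    _ = q := by rw [this]; rfl

lemma eps_surjective (n : ℕ) : Function.Surjective (eps n) :=
  fun q => ⟨rename Fin.succ q, eps_rename n q⟩

/-- In a UFD, if `d` divides `x*a` and `y*a` for relatively prime `x`, `y`,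
then `d` divides `a`. -/
lemma dvd_of_dvd_mul_relPrime {A : Type*} [CommRing A] [IsDomain A]
    [UniqueFactorizationMonoid A] {d x y a : A} (hx : d ∣ x * a) (hy : d ∣ y * a)
    (hrel : IsRelPrime x y) : d ∣ a := by
  letI : GCDMonoid A := UniqueFactorizationMonoid.toGCDMonoid A
  have h1 : d ∣ gcd (x * a) (y * a) := dvd_gcd hx hy
  have h2 : Associated (gcd (x * a) (y * a)) (gcd x y * a) := by
    have := gcd_mul_right' a x y
    exact this
  have hu : IsUnit (gcd x y) := hrel (gcd_dvd_left x y) (gcd_dvd_right x y)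
  have h3 : gcd x y * a ∣ a := by
    obtain ⟨u, hu'⟩ := hu
    refine ⟨↑u⁻¹, ?_⟩
    rw [← hu', mul_comm, ← mul_assoc, mul_comm (↑u⁻¹ : A), Units.mul_inv, one_mul]
  exact (h1.trans h2.dvd).trans h3

lemma isRelPrime_X01 : IsRelPrime (X 0 : MvPolynomial (Fin 2) ℂ) (X 1) := by
  intro d hd0 hd1
  obtain ⟨e, he⟩ := hd0
  rcases (prime_X_zero 1).irreducible.isUnit_or_isUnit he with h | h
  · exact h
  · exfalso
    obtain ⟨ei, hei⟩ := h.exists_right_inv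
    have hX0d : (X 0 : MvPolynomial (Fin 2) ℂ) ∣ d :=
      ⟨ei, by rw [he, mul_assoc, hei, mul_one]⟩
    have hdvd : (X 0 : MvPolynomial (Fin 2) ℂ) ∣ X 1 := hX0d.trans hd1
    obtain ⟨q, hq⟩ := hdvd
    have := congrArg (eval (fun i : Fin 2 => if i = 0 then 0 else 1)) hq
    simp at this

/-- The key descent lemma: if `X i * H ∈ (F, G)` for all three variables,
then `H ∈ (F, G)`. -/
lemma descend {F G : R3} (hFi : Irreducible F) (hF3 : F.IsHomogeneous 3) (hF0 : F ≠ 0)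
    (hrel : IsRelPrime F G) (H : R3)
    (hmem : ∀ i : Fin 3, X i * H ∈ Ideal.span {F, G}) :
    H ∈ Ideal.span ({F, G} : Set R3) := by
  have hX0F : ¬ (X 0 : R3) ∣ F := by
    rintro ⟨e, he⟩
    rcases hFi.isUnit_or_isUnit he with h | h
    · exact (prime_X_zero 2).not_unit h
    · obtain ⟨ei, hei⟩ := h.exists_right_inv
      have he0 : e ≠ 0 := by rintro rfl; rw [zero_mul] at hei; exact one_ne_zero hei.symm
      have hei0 : ei ≠ 0 := by rintro rfl; rw [mul_zero] at hei; exact one_ne_zero hei.symm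
      obtain ⟨a, b, hab, hXa, heb⟩ := isHomogeneous_of_mul_isHomogeneous (X_ne_zero 0) he0
        (he ▸ hF3)
      obtain ⟨b', c', hbc, heb', _⟩ := isHomogeneous_of_mul_isHomogeneous he0 hei0
        (hei ▸ isHomogeneous_one (Fin 3) ℂ)
      have hb : b = b' := homog_deg_eq he0 heb heb'
      have ha : a = 1 := homog_deg_eq (X_ne_zero 0) hXa (isHomogeneous_X ℂ 0)
      omega
  obtain ⟨a₁, b₁, h₁⟩ := Ideal.mem_span_pair.1 (hmem 0)
  obtain ⟨a₂, b₂, h₂⟩ := Ideal.mem_span_pair.1 (hmem 1)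
  obtain ⟨a₃, b₃, h₃⟩ := Ideal.mem_span_pair.1 (hmem 2)
  -- syzygies
  have syz : ∀ (a b : R3), a * F + b * G = 0 → ∃ c, b = c * F := by
    intro a b hab
    have : F ∣ G * b := by
      refine ⟨-a, ?_⟩
      linear_combination hab
    obtain ⟨c, hc⟩ := hrel.dvd_of_dvd_mul_left this
    exact ⟨c, by rw [hc]; ring⟩
  obtain ⟨c₃, hc₃⟩ : ∃ c, X 1 * b₁ - X 0 * b₂ = c * F := by
    apply syz (X 1 * a₁ - X 0 * a₂)
    linear_combination X 1 * h₁ - X 0 * h₂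
  obtain ⟨c₂, hc₂⟩ : ∃ c, X 2 * b₁ - X 0 * b₃ = c * F := by
    apply syz (X 2 * a₁ - X 0 * a₃)
    linear_combination X 2 * h₁ - X 0 * h₃
  -- pass to the quotient by X 0
  have hFbar : eps 2 F ≠ 0 := fun h => hX0F ((X_zero_dvd_iff 2 F).2 h)
  have hd1 : eps 2 F ∣ X 0 * eps 2 b₁ := by
    refine ⟨eps 2 c₃, ?_⟩
    have := congrArg (eps 2) hc₃
    simp only [map_sub, map_mul] at this
    have h10 : eps 2 (X 1) = X 0 := by
      have : (1 : Fin 3) = (Fin.succ 0) := rfl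
      rw [this, eps_X_succ]
    have h00 : eps 2 (X 0) = 0 := eps_X_zero 2
    rw [h10, h00, zero_mul, sub_zero] at this
    rw [this]; ring
  have hd2 : eps 2 F ∣ X 1 * eps 2 b₁ := by
    refine ⟨eps 2 c₂, ?_⟩
    have := congrArg (eps 2) hc₂
    simp only [map_sub, map_mul] at this
    have h21 : eps 2 (X 2) = X 1 := by
      have : (2 : Fin 3) = (Fin.succ 1) := rfl
      rw [this, eps_X_succ]
    have h00 : eps 2 (X 0) = 0 := eps_X_zero 2
    rw [h21, h00, zero_mul, sub_zero] at this
    rw [this]; ring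
  have hdvd : eps 2 F ∣ eps 2 b₁ := dvd_of_dvd_mul_relPrime hd1 hd2 isRelPrime_X01
  obtain ⟨ebar, hebar⟩ := hdvd
  set e : R3 := rename Fin.succ ebar with he
  have heps : eps 2 (b₁ - F * e) = 0 := by
    rw [map_sub, map_mul, he, eps_rename, hebar]
    ring
  obtain ⟨b₁', hb₁'⟩ := (X_zero_dvd_iff 2 _).2 heps
  -- now X 0 * (H - b₁' * G) = (a₁ + e * G) * F
  have hkey : X 0 * (H - b₁' * G) = (a₁ + e * G) * F := by
    have hb₁ : b₁ = F * e + X 0 * b₁' := by linear_combination hb₁'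
    linear_combination -h₁ + G * hb₁
  have hX0div : (X 0 : R3) ∣ (a₁ + e * G) := by
    rcases (prime_X_zero 2).2.2 (a₁ + e * G) F ⟨H - b₁' * G, hkey.symm⟩ with h | h
    · exact h
    · exact absurd h hX0F
  obtain ⟨a₁', ha₁'⟩ := hX0div
  have hfinal : H - b₁' * G = a₁' * F := by
    apply mul_left_cancel₀ (X_ne_zero (R := ℂ) 0)
    rw [hkey, ha₁']
    ring
  exact Ideal.mem_span_pair.2 ⟨a₁', b₁', by linear_combination -hfinal⟩

end Descent


section Dimension

lemma degree_eq_sum_univ (m : Fin 3 →₀ ℕ) : m.degree = ∑ i : Fin 3, m i := by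
  show ∑ a ∈ m.support, m a = ∑ i : Fin 3, m i
  exact Finset.sum_subset (Finset.subset_univ _)
    (fun i _ hi => Finsupp.notMem_support_iff.1 hi)

/-- The finset of exponents of degree-`d` monomials in three variables. -/
noncomputable def mons (d : ℕ) : Finset (Fin 3 →₀ ℕ) :=
  (Finset.Nat.antidiagonalTuple 3 d).map
    ⟨Finsupp.equivFunOnFinite.symm, Finsupp.equivFunOnFinite.symm.injective⟩

lemma mem_mons {d : ℕ} {m : Fin 3 →₀ ℕ} : m ∈ mons d ↔ m.degree = d := by
  simp only [mons, Finset.mem_map, Function.Embedding.coeFn_mk]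
  constructor
  · rintro ⟨x, hx, rfl⟩
    rw [degree_eq_sum_univ]
    rw [Finset.Nat.mem_antidiagonalTuple] at hx
    rw [← hx]
    rfl
  · intro h
    refine ⟨Finsupp.equivFunOnFinite m, ?_, by simp⟩
    rw [Finset.Nat.mem_antidiagonalTuple, ← h, degree_eq_sum_univ]
    rfl

lemma card_mons (d : ℕ) : (mons d).card = (Finset.Nat.antidiagonalTuple 3 d).card :=
  Finset.card_map _

/-- coefficient-extraction linear equivalence for the space of homogeneous
polynomials of degree `d`. -/
noncomputable def homogCoeffEquiv (d : ℕ) :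
    (homogeneousSubmodule (Fin 3) ℂ d) ≃ₗ[ℂ] ({ m : Fin 3 →₀ ℕ // m ∈ mons d } → ℂ) := by
  refine LinearEquiv.ofBijective
    { toFun := fun P m => coeff m.val P.val
      map_add' := by intro P Q; funext m; simp
      map_smul' := by intro c P; funext m; simp } ⟨?_, ?_⟩
  · intro P Q h
    ext m
    by_cases hm : m.degree = d
    · exact congrFun h ⟨m, mem_mons.2 hm⟩
    · have hP := (mem_homogeneousSubmodule d P.val).1 P.2
      have hQ := (mem_homogeneousSubmodule d Q.val).1 Q.2
      have h1 : coeff m P.val = 0 := by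
        by_contra hc
        have := hP hc
        rw [Pi.one_def, ← Finsupp.degree_eq_weight_one] at this
        exact hm this
      have h2 : coeff m Q.val = 0 := by
        by_contra hc
        have := hQ hc
        rw [Pi.one_def, ← Finsupp.degree_eq_weight_one] at this
        exact hm this
      show coeff m P.val = coeff m Q.val
      rw [h1, h2]
  · intro f
    classical
    refine ⟨⟨∑ m ∈ (mons d).attach, monomial m.val (f m), ?_⟩, ?_⟩
    · rw [mem_homogeneousSubmodule]
      exact IsHomogeneous.sum _ _ _ (fun m _ => isHomogeneous_monomial _ (mem_mons.1 m.2))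
    · funext m₀
      show coeff m₀.val (∑ m ∈ (mons d).attach, monomial m.val (f m)) = f m₀
      rw [coeff_sum]
      rw [Finset.sum_eq_single m₀]
      · rw [coeff_monomial, if_pos rfl]
      · intro m _ hm
        rw [coeff_monomial, if_neg (fun h => hm (Subtype.ext h))]
      · intro h
        exact absurd (Finset.mem_attach _ m₀) h

instance homog_finiteDimensional (d : ℕ) :
    FiniteDimensional ℂ (homogeneousSubmodule (Fin 3) ℂ d) :=
  Module.Finite.equiv (homogCoeffEquiv d).symm

lemma finrank_homog (d : ℕ) :
    Module.finrank ℂ (homogeneousSubmodule (Fin 3) ℂ d)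
      = (Finset.Nat.antidiagonalTuple 3 d).card := by
  rw [(homogCoeffEquiv d).finrank_eq, Module.finrank_pi]
  rw [Fintype.card_coe, card_mons]

end Dimension


section Separators

noncomputable def linForm (l : Fin 3 → ℂ) : R3 := ∑ m : Fin 3, C (l m) * X m

lemma linForm_homog (l : Fin 3 → ℂ) : (linForm l).IsHomogeneous 1 := by
  apply IsHomogeneous.sum
  intro m _
  have := (isHomogeneous_C (Fin 3) (l m)).mul (isHomogeneous_X ℂ m)
  simpa using this

lemma eval_linForm (l : Fin 3 → ℂ) (v : Fin 3 → ℂ) :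
    eval v (linForm l) = ∑ m : Fin 3, l m * v m := by
  simp [linForm]

lemma sum_single_mul (k : Fin 3) (a : ℂ) (w : Fin 3 → ℂ) :
    ∑ m : Fin 3, (Pi.single k a : Fin 3 → ℂ) m * w m = a * w k := by
  rw [Finset.sum_eq_single k]
  · rw [Pi.single_eq_same]
  · intro m _ hm
    rw [Pi.single_eq_of_ne hm, zero_mul]
  · intro h
    exact absurd (Finset.mem_univ k) h

lemma exists_sep_linear {u v : Fin 3 → ℂ} (hu : u ≠ 0) (hv : v ≠ 0)
    (hnp : ¬ SameProjPt u v) :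
    ∃ l : Fin 3 → ℂ, (∑ m : Fin 3, l m * u m) = 0 ∧ (∑ m : Fin 3, l m * v m) ≠ 0 := by
  classical
  have hminor : ∃ k l', u k * v l' - u l' * v k ≠ 0 := by
    by_contra hcon
    push_neg at hcon
    obtain ⟨k₀, hk₀⟩ : ∃ k₀, u k₀ ≠ 0 := by
      by_contra hcon2
      push_neg at hcon2
      exact hu (funext hcon2)
    set c : ℂ := v k₀ / u k₀ with hc
    have hcu : c • u = v := by
      funext m
      have := hcon k₀ m
      show c * u m = v m
      rw [hc]
      field_simp
      linear_combination -this
    have hc0 : c ≠ 0 := by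
      intro h
      rw [h, zero_smul] at hcu
      exact hv hcu.symm
    exact hnp ⟨c, hc0, hcu⟩
  obtain ⟨k, l', hkl⟩ := hminor
  have hkne : k ≠ l' := by
    rintro rfl
    apply hkl
    ring
  refine ⟨(Pi.single k (u l') : Fin 3 → ℂ) + (Pi.single l' (-(u k)) : Fin 3 → ℂ), ?_, ?_⟩
  · have : ∑ m : Fin 3, ((Pi.single k (u l') : Fin 3 → ℂ) + (Pi.single l' (-(u k)) : Fin 3 → ℂ)) m * u m
        = u l' * u k + (-(u k)) * u l' := by
      simp only [Pi.add_apply, add_mul]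
      rw [Finset.sum_add_distrib, sum_single_mul, sum_single_mul]
    rw [this]; ring
  · have : ∑ m : Fin 3, ((Pi.single k (u l') : Fin 3 → ℂ) + (Pi.single l' (-(u k)) : Fin 3 → ℂ)) m * v m
        = u l' * v k + (-(u k)) * v l' := by
      simp only [Pi.add_apply, add_mul]
      rw [Finset.sum_add_distrib, sum_single_mul, sum_single_mul]
    rw [this]
    intro h
    apply hkl
    linear_combination -h
end Separators

section MainCount
variable {F G : R3} {p : Fin 9 → Fin 3 → ℂ}

lemma exists_separator (hp : NinePoints F G p) (i : Fin 9) :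
    ∃ N : R3, N.IsHomogeneous 8 ∧ (∀ j, j ≠ i → eval (p j) N = 0) ∧ eval (p i) N ≠ 0 := by
  classical
  have h : ∀ j : Fin 9, ∃ l : Fin 3 → ℂ, j ≠ i →
      ((∑ m : Fin 3, l m * (p j) m) = 0 ∧ (∑ m : Fin 3, l m * (p i) m) ≠ 0) := by
    intro j
    by_cases hj : j = i
    · exact ⟨0, fun h => absurd hj h⟩
    · obtain ⟨l, hl⟩ := exists_sep_linear (hp.1 j) (hp.1 i) (hp.2.1 j i hj)
      exact ⟨l, fun _ => hl⟩
  choose l hl using h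
  refine ⟨∏ j ∈ Finset.univ.erase i, linForm (l j), ?_, ?_, ?_⟩
  · have hprod := IsHomogeneous.prod (Finset.univ.erase i) (fun j => linForm (l j))
      (fun _ => 1) (fun j _ => linForm_homog (l j))
    have hcard : ∑ _j ∈ Finset.univ.erase i, 1 = 8 := by
      rw [Finset.sum_const, Finset.card_erase_of_mem (Finset.mem_univ i)]
      simp
    rwa [hcard] at hprod
  · intro j hj
    rw [map_prod]
    apply Finset.prod_eq_zero (Finset.mem_erase.2 ⟨hj, Finset.mem_univ j⟩)
    rw [eval_linForm]
    exact (hl j hj).1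
  · rw [map_prod]
    rw [Finset.prod_ne_zero_iff]
    intro j hj
    rw [eval_linForm]
    exact (hl j (Finset.mem_erase.1 hj).1).2

end MainCount


section Count8
variable {F G : R3} {p : Fin 9 → Fin 3 → ℂ}

/-- Key counting lemma: a homogeneous octic vanishing at the nine points lies in
the ideal `(F, G)`. -/
lemma octic_mem_span (hF : SmoothCubic F) (hG : SmoothCubic G) (hp : NinePoints F G p)
    (htr : Transverse F G (p 0)) :
    ∀ P : R3, P.IsHomogeneous 8 → (∀ j, eval (p j) P = 0) →
      P ∈ Ideal.span ({F, G} : Set R3) := by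
  classical
  have hF0 : F ≠ 0 := hF.1.1
  have hG0 : G ≠ 0 := hG.1.1
  have hF3 : F.IsHomogeneous 3 := hF.1.2
  have hG3 : G.IsHomogeneous 3 := hG.1.2
  have hrel : IsRelPrime F G := relPrime_FG hF hG htr
  set W8 := homogeneousSubmodule (Fin 3) ℂ 8
  set W5 := homogeneousSubmodule (Fin 3) ℂ 5
  set W2 := homogeneousSubmodule (Fin 3) ℂ 2
  -- the evaluation map
  let e : W8 →ₗ[ℂ] (Fin 9 → ℂ) :=
    { toFun := fun P j => eval (p j) P.val
      map_add' := by intro P Q; funext j; simp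
      map_smul' := by intro c P; funext j; simp [smul_eq_C_mul] }
  have hesurj : LinearMap.range e = ⊤ := by
    rw [← top_le_iff, ← (Pi.basisFun ℂ (Fin 9)).span_eq, Submodule.span_le]
    rintro x ⟨i, rfl⟩
    obtain ⟨N, hN8, hNj, hNi⟩ := exists_separator hp i
    have hmem : (eval (p i) N)⁻¹ • N ∈ W8 := by
      rw [smul_eq_C_mul]
      have := (isHomogeneous_C (Fin 3) ((eval (p i) N)⁻¹)).mul hN8
      exact (mem_homogeneousSubmodule 8 _).2 (by simpa using this)
    refine ⟨⟨(eval (p i) N)⁻¹ • N, hmem⟩, ?_⟩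
    funext j
    show eval (p j) ((eval (p i) N)⁻¹ • N) = Pi.basisFun ℂ (Fin 9) i j
    rw [smul_eq_C_mul, map_mul, eval_C, Pi.basisFun_apply]
    rcases eq_or_ne j i with rfl | hj
    · rw [inv_mul_cancel₀ hNi, Pi.single_eq_same]
    · rw [hNj j hj, mul_zero, Pi.single_eq_of_ne hj]
  have hrank8 : Module.finrank ℂ W8 = 45 := by
    rw [finrank_homog 8]
    decide
  have hrank5 : Module.finrank ℂ W5 = 21 := by
    rw [finrank_homog 5]
    decide
  have hrank2 : Module.finrank ℂ W2 = 6 := by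
    rw [finrank_homog 2]
    decide
  have hkere : Module.finrank ℂ (LinearMap.ker e) = 36 := by
    have := LinearMap.finrank_range_add_finrank_ker e
    rw [hesurj, finrank_top, hrank8] at this
    have h9 : Module.finrank ℂ (Fin 9 → ℂ) = 9 := by simp
    omega
  -- the pencil map
  have hmulmem : ∀ (a : W5) (P : R3), P.IsHomogeneous 3 → a.val * P ∈ W8 := by
    intro a P hP
    have := ((mem_homogeneousSubmodule 5 a.val).1 a.2).mul hP
    rwa [show (5 + 3 : ℕ) = 8 by norm_num] at this
  let T : (W5 × W5) →ₗ[ℂ] W8 :=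
    { toFun := fun ab => ⟨ab.1.val * F + ab.2.val * G,
        Submodule.add_mem _ (hmulmem ab.1 F hF3) (hmulmem ab.2 G hG3)⟩
      map_add' := by intro x y; apply Subtype.ext; show _ = _ + _; simp; ring
      map_smul' := by intro c x; apply Subtype.ext; show _ = _; simp [smul_eq_C_mul]; ring }
  have hmul2mem : ∀ (c : W2) (P : R3), P.IsHomogeneous 3 → c.val * P ∈ W5 := by
    intro c P hP
    have := ((mem_homogeneousSubmodule 2 c.val).1 c.2).mul hP
    rwa [show (2 + 3 : ℕ) = 5 by norm_num] at this
  let κ : W2 →ₗ[ℂ] (W5 × W5) :=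
    { toFun := fun c => (⟨c.val * G, hmul2mem c G hG3⟩, ⟨-(c.val * F), neg_mem (hmul2mem c F hF3)⟩)
      map_add' := by
        intro x y
        refine Prod.ext (Subtype.ext ?_) (Subtype.ext ?_) <;> (show _ = _) <;> simp <;> ring
      map_smul' := by
        intro c x
        refine Prod.ext (Subtype.ext ?_) (Subtype.ext ?_) <;> (show _ = _) <;>
          simp [smul_eq_C_mul] <;> ring }
  have hκinj : Function.Injective κ := by
    intro c c' h
    have h1 : c.val * G = c'.val * G := congrArg (fun x => (x.1 : R3)) h
    exact Subtype.ext (mul_right_cancel₀ hG0 h1)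
  have hkerT : LinearMap.ker T = LinearMap.range κ := by
    apply le_antisymm
    · rintro ⟨a, b⟩ hab
      have hab' : a.val * F + b.val * G = 0 := congrArg Subtype.val hab
      have hdvd : G ∣ F * a.val := ⟨-b.val, by linear_combination hab'⟩
      obtain ⟨c, hc⟩ := hrel.symm.dvd_of_dvd_mul_left hdvd
      have hbv : b.val = -(c * F) := by
        have : G * (c * F + b.val) = 0 := by linear_combination hab' - F * hc
        rcases mul_eq_zero.1 this with h | h
        · exact absurd h hG0
        · linear_combination h
      have hcW2 : c ∈ W2 := by
        rw [mem_homogeneousSubmodule]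
        rcases eq_or_ne c 0 with rfl | hc0
        · exact isHomogeneous_zero _ _ _
        · have ha0 : a.val ≠ 0 := by
            intro h0
            rw [h0] at hc
            rcases mul_eq_zero.1 hc.symm with h | h
            · exact hG0 h
            · exact hc0 h
          obtain ⟨x, y, hxy, hGx, hcy⟩ := isHomogeneous_of_mul_isHomogeneous hG0 hc0
            (by rw [← hc]; exact (mem_homogeneousSubmodule 5 a.val).1 a.2)
          have hx3 : x = 3 := homog_deg_eq hG0 hGx hG3
          have : y = 2 := by omega
          rwa [← this]
      refine ⟨⟨c, hcW2⟩, ?_⟩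
      refine Prod.ext (Subtype.ext ?_) (Subtype.ext ?_)
      · show c * G = a.val
        rw [hc]; ring
      · show -(c * F) = b.val
        rw [hbv]
    · rintro _ ⟨c, rfl⟩
      rw [LinearMap.mem_ker]
      apply Subtype.ext
      show c.val * G * F + -(c.val * F) * G = 0
      ring
  have hrankT : Module.finrank ℂ (LinearMap.range T) = 36 := by
    have h1 := LinearMap.finrank_range_add_finrank_ker T
    rw [hkerT, LinearMap.finrank_range_of_inj hκinj, hrank2] at h1
    rw [Module.finrank_prod, hrank5] at h1
    omega
  have hle : LinearMap.range T ≤ LinearMap.ker e := by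
    rintro _ ⟨⟨a, b⟩, rfl⟩
    rw [LinearMap.mem_ker]
    funext j
    show eval (p j) (a.val * F + b.val * G) = 0
    rw [map_add, map_mul, map_mul, (hp.2.2.1 j).1, (hp.2.2.1 j).2]
    ring
  have hEq : LinearMap.range T = LinearMap.ker e :=
    Submodule.eq_of_le_of_finrank_le hle (by rw [hrankT, hkere])
  intro P hP8 hPvan
  have hPW8 : P ∈ W8 := (mem_homogeneousSubmodule 8 P).2 hP8
  have hPker : (⟨P, hPW8⟩ : W8) ∈ LinearMap.ker e := by
    rw [LinearMap.mem_ker]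
    funext j
    exact hPvan j
  rw [← hEq] at hPker
  obtain ⟨⟨a, b⟩, hab⟩ := hPker
  have hab' : a.val * F + b.val * G = P := congrArg Subtype.val hab
  exact Ideal.mem_span_pair.2 ⟨a.val, b.val, hab'⟩

end Count8


section Final
variable {F G : R3} {p : Fin 9 → Fin 3 → ℂ}

lemma cubic_mem_ideal (hF : SmoothCubic F) (hG : SmoothCubic G) (hp : NinePoints F G p)
    (htr : Transverse F G (p 0)) (H : R3) (hH3 : H.IsHomogeneous 3)
    (hvan : ∀ j, eval (p j) H = 0) : H ∈ Ideal.span ({F, G} : Set R3) := by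
  classical
  have hFi := smoothCubic_irreducible hF
  have hrel := relPrime_FG hF hG htr
  have step : ∀ k : ℕ,
      (∀ α : Fin 3 →₀ ℕ, α.degree = k + 1 → monomial α 1 * H ∈ Ideal.span ({F, G} : Set R3)) →
      (∀ α : Fin 3 →₀ ℕ, α.degree = k → monomial α 1 * H ∈ Ideal.span ({F, G} : Set R3)) := by
    intro k hk α hα
    apply descend hFi hF.1.2 hF.1.1 hrel
    intro i
    have hXi : X i * (monomial α 1 * H) = monomial (Finsupp.single i 1 + α) 1 * H := by
      rw [← mul_assoc, X, monomial_mul, one_mul]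
    rw [hXi]
    apply hk
    rw [degree_eq_sum_univ]
    have : ∀ j : Fin 3, ((Finsupp.single i 1 + α : Fin 3 →₀ ℕ)) j = (if i = j then 1 else 0) + α j := by
      intro j
      rw [Finsupp.add_apply, Finsupp.single_apply]
    simp_rw [this]
    rw [Finset.sum_add_distrib, Finset.sum_ite_eq, if_pos (Finset.mem_univ i),
      ← degree_eq_sum_univ, hα]
    omega
  have base : ∀ α : Fin 3 →₀ ℕ, α.degree = 5 →
      monomial α 1 * H ∈ Ideal.span ({F, G} : Set R3) := by
    intro α hα
    apply octic_mem_span hF hG hp htr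
    · have := (isHomogeneous_monomial (1 : ℂ) hα).mul hH3
      rwa [show (5 + 3 : ℕ) = 8 by norm_num] at this
    · intro j
      rw [map_mul, hvan j, mul_zero]
  have h0 := step 0 (step 1 (step 2 (step 3 (step 4 base)))) 0 (map_zero _)
  rwa [show ((monomial (0 : Fin 3 →₀ ℕ)) (1 : ℂ)) = 1 by
    rw [monomial_zero']; exact C_1, one_mul] at h0

lemma homogComponent3_mul {P : R3} (a : R3) (hP : P.IsHomogeneous 3) :
    homogeneousComponent 3 (a * P) = C (coeff 0 a) * P := by
  classical
  have hsplit : a * P = ∑ i ∈ Finset.range (a.totalDegree + 1),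
      homogeneousComponent i a * P := by
    rw [← Finset.sum_mul, sum_homogeneousComponent]
  rw [hsplit, map_sum]
  have hterm : ∀ i ∈ Finset.range (a.totalDegree + 1),
      homogeneousComponent 3 (homogeneousComponent i a * P)
        = if i = 0 then homogeneousComponent 0 a * P else 0 := by
    intro i _
    have hmem : homogeneousComponent i a * P ∈ homogeneousSubmodule (Fin 3) ℂ (i + 3) := by
      rw [mem_homogeneousSubmodule]
      exact (homogeneousComponent_isHomogeneous i a).mul hP
    rw [homogeneousComponent_of_mem hmem]
    rcases eq_or_ne i 0 with rfl | hi
    · rw [if_pos rfl, if_pos rfl]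
    · rw [if_neg (by omega), if_neg hi]
  rw [Finset.sum_congr rfl hterm, Finset.sum_ite_eq' (Finset.range (a.totalDegree + 1))
    (0 : ℕ) (fun _ => homogeneousComponent 0 a * P), if_pos (by simp),
    homogeneousComponent_zero]

lemma ideal_to_span (hF3 : F.IsHomogeneous 3) (hG3 : G.IsHomogeneous 3) (H : R3)
    (hH3 : H.IsHomogeneous 3) (hmem : H ∈ Ideal.span ({F, G} : Set R3)) :
    H ∈ Submodule.span ℂ ({F, G} : Set R3) := by
  obtain ⟨a, b, hab⟩ := Ideal.mem_span_pair.1 hmem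
  have hH : homogeneousComponent 3 H = H :=
    by rw [homogeneousComponent_of_mem ((mem_homogeneousSubmodule 3 H).2 hH3), if_pos rfl]
  have : H = C (coeff 0 a) * F + C (coeff 0 b) * G := by
    rw [← hH, ← hab, map_add, homogComponent3_mul a hF3, homogComponent3_mul b hG3]
  exact Submodule.mem_span_pair.2 ⟨coeff 0 a, coeff 0 b,
    by rw [smul_eq_C_mul, smul_eq_C_mul, ← this]⟩

end Final

/-- The vector space of homogeneous degree-3 polynomials vanishing at the nine
transversal intersection points of two smooth cubics `F`, `G` is exactly the
two-dimensional span of `F` and `G`. -/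
theorem cubics_through_nine_points_eq_pencil
    (F G : MvPolynomial (Fin 3) ℂ) (hF : SmoothCubic F) (hG : SmoothCubic G)
    (p : Fin 9 → Fin 3 → ℂ) (hp : NinePoints F G p)
    (htrans : ∀ i, Transverse F G (p i)) :
    {H : MvPolynomial (Fin 3) ℂ | H.IsHomogeneous 3 ∧ ∀ i, eval (p i) H = 0}
      = (Submodule.span ℂ {F, G} : Set (MvPolynomial (Fin 3) ℂ)) ∧
    LinearIndependent ℂ ![F, G] := by
  constructor
  · ext H
    simp only [Set.mem_setOf_eq, SetLike.mem_coe]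
    constructor
    · rintro ⟨hH3, hvan⟩
      exact ideal_to_span hF.1.2 hG.1.2 H hH3
        (cubic_mem_ideal hF hG hp (htrans 0) H hH3 hvan)
    · intro hmem
      obtain ⟨a, b, hab⟩ := Submodule.mem_span_pair.1 hmem
      constructor
      · rw [← hab, smul_eq_C_mul, smul_eq_C_mul]
        exact (hF.1.2.C_mul a).add (hG.1.2.C_mul b)
      · intro i
        rw [← hab, smul_eq_C_mul, smul_eq_C_mul, map_add, map_mul, map_mul,
          (hp.2.2.1 i).1, (hp.2.2.1 i).2]
        ring
  · rw [LinearIndependent.pair_iff]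
    intro s t hst
    have hgrad : s • grad F (p 0) + t • grad G (p 0) = 0 := by
      funext i
      have h1 : eval (p 0) (pderiv i (C s * F + C t * G)) = 0 := by
        rw [← smul_eq_C_mul, ← smul_eq_C_mul, hst]
        simp
      rw [map_add, pderiv_mul, pderiv_mul, pderiv_C, pderiv_C, zero_mul, zero_mul,
        zero_add, zero_add, map_add, map_mul, map_mul, eval_C, eval_C] at h1
      show (s • grad F (p 0)) i + (t • grad G (p 0)) i = 0
      simp only [Pi.smul_apply, smul_eq_mul]
      exact h1
    exact LinearIndependent.pair_iff.1 (htrans 0) s t hgrad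
end

section
/- Let F and G be smooth cubics in ℂ[X,Y,Z] whose common projective zero set consists of exactly nine distinct points of ℙ², with F and G meeting transversally at each of these points. Then for all but finitely many λ ∈ ℂ, the cubic F + λG is smooth. -/
open MvPolynomial

namespace PencilAux

/-- Evaluation of a homogeneous polynomial at a scalar multiple. -/
lemma eval_smul_of_isHomogeneous (p : MvPolynomial (Fin 3) ℂ) (n : ℕ)
    (h : p.IsHomogeneous n) (c : ℂ) (v : Fin 3 → ℂ) :
    eval (c • v) p = c ^ n * eval v p := by
  conv_lhs => rw [← support_sum_monomial_coeff p]
  conv_rhs => rw [← support_sum_monomial_coeff p]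
  rw [map_sum, map_sum, Finset.mul_sum]
  refine Finset.sum_congr rfl fun d hd => ?_
  have hcoeff : coeff d p ≠ 0 := mem_support_iff.mp hd
  have hdeg : Finsupp.degree d = n := by
    have := h hcoeff
    rwa [Finsupp.degree_eq_weight_one]
  rw [eval_monomial, eval_monomial]
  have : (d.prod fun i e => (c • v) i ^ e) = c ^ n * d.prod fun i e => v i ^ e := by
    rw [Finsupp.prod, Finsupp.prod]
    have : ∀ i ∈ d.support, (c • v) i ^ d i = c ^ d i * v i ^ d i := by
      intro i _
      simp [Pi.smul_apply, smul_eq_mul, mul_pow]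
    rw [Finset.prod_congr rfl this, Finset.prod_mul_distrib, Finset.prod_pow_eq_pow_sum]
    rw [← hdeg, Finsupp.degree]
    rfl
  rw [this]; ring

/-- The partial derivative of a homogeneous polynomial is homogeneous. -/
lemma isHomogeneous_pderiv {p : MvPolynomial (Fin 3) ℂ} {n : ℕ}
    (h : p.IsHomogeneous n) (i : Fin 3) :
    (pderiv i p).IsHomogeneous (n - 1) := by
  conv_lhs => rw [← support_sum_monomial_coeff p]
  rw [map_sum]
  apply MvPolynomial.IsHomogeneous.sum
  intro d hd
  have hcoeff : coeff d p ≠ 0 := mem_support_iff.mp hd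
  have hdeg : Finsupp.degree d = n := by
    have := h hcoeff
    rwa [Finsupp.degree_eq_weight_one]
  rw [pderiv_monomial]
  by_cases hdi : d i = 0
  · rw [hdi]; simp [isHomogeneous_zero]
  · apply isHomogeneous_monomial
    have hle : Finsupp.single i 1 ≤ d := by
      rw [Finsupp.single_le_iff]; omega
    have hadd : (d - Finsupp.single i 1) + Finsupp.single i 1 = d :=
      tsub_add_cancel_of_le hle
    have hdeg' : Finsupp.degree (d - Finsupp.single i 1) + 1 = n := by
      have := congrArg Finsupp.degree hadd
      rw [Finsupp.degree_eq_weight_one] at this ⊢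
      rw [map_add] at this
      have hsing : (Finsupp.weight fun _ => 1) (Finsupp.single i 1) = 1 := by
        simp [Finsupp.weight_apply, Finsupp.sum_single_index]
      rw [hsing] at this
      rw [this]
      rw [Finsupp.degree_eq_weight_one] at hdeg
      exact hdeg
    omega

/-- If a polynomial vanishes on the whole line through `v`, then each of its
homogeneous components vanishes at `v`. -/
lemma eval_homogeneousComponent_eq_zero (g : MvPolynomial (Fin 3) ℂ) (v : Fin 3 → ℂ)
    (hvan : ∀ c : ℂ, eval (c • v) g = 0) (n : ℕ) :
    eval v (homogeneousComponent n g) = 0 := by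
  by_cases hn : g.totalDegree < n
  · rw [homogeneousComponent_eq_zero _ _ hn, map_zero]
  push_neg at hn
  set r : Polynomial ℂ :=
    ∑ m ∈ Finset.range (g.totalDegree + 1),
      Polynomial.C (eval v (homogeneousComponent m g)) * Polynomial.X ^ m with hr
  have hrev : ∀ c : ℂ, r.eval c = eval (c • v) g := by
    intro c
    rw [hr]
    rw [Polynomial.eval_finset_sum]
    conv_rhs => rw [← sum_homogeneousComponent g]
    rw [map_sum]
    refine Finset.sum_congr rfl fun m _ => ?_
    rw [eval_smul_of_isHomogeneous _ m (homogeneousComponent_isHomogeneous m g) c v]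
    rw [Polynomial.eval_mul, Polynomial.eval_C, Polynomial.eval_pow, Polynomial.eval_X,
      mul_comm]
  have hr0 : r = 0 := by
    apply Polynomial.funext
    intro c
    rw [hrev c, hvan c, Polynomial.eval_zero]
  have := congrArg (fun q => Polynomial.coeff q n) hr0
  simp only [Polynomial.coeff_zero] at this
  rw [hr] at this
  rw [Polynomial.finset_sum_coeff] at this
  rw [Finset.sum_eq_single n] at this
  · simpa using this
  · intro m _ hm
    simp [Polynomial.coeff_C_mul, Polynomial.coeff_X_pow, hm, Ne.symm hm]
  · intro hnmem
    exact absurd (Finset.mem_range.mpr (by omega)) hnmem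

/-- From smoothness: there is `D ≥ 1` such that every homogeneous polynomial of
degree `D` lies in the ideal generated by the partial derivatives of `F`. -/
lemma exists_degree_ideal (F : MvPolynomial (Fin 3) ℂ)
    (hFsm : ∀ v : Fin 3 → ℂ, (fun i => eval v (pderiv i F)) = 0 → v = 0) :
    ∃ D : ℕ, 1 ≤ D ∧ ∀ w : MvPolynomial (Fin 3) ℂ, w.IsHomogeneous D →
      w ∈ Ideal.span (Set.range fun i => pderiv i F) := by
  set I₀ : Ideal (MvPolynomial (Fin 3) ℂ) := Ideal.span (Set.range fun i => pderiv i F) with hI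
  have hzero : ∀ x ∈ MvPolynomial.zeroLocus ℂ I₀, x = 0 := by
    intro x hx
    apply hFsm
    funext i
    exact hx _ (Ideal.subset_span ⟨i, rfl⟩)
  have hXrad : ∀ i : Fin 3, (X i : MvPolynomial (Fin 3) ℂ) ∈ I₀.radical := by
    intro i
    rw [← vanishingIdeal_zeroLocus_eq_radical (K := ℂ)]
    rw [mem_vanishingIdeal_iff]
    intro x hx
    rw [aeval_X, hzero x hx]
    rfl
  choose n hn using fun i => Ideal.mem_radical_iff.mp (hXrad i)
  set N : ℕ := Finset.univ.sup n with hN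
  have hXN : ∀ i : Fin 3, (X i : MvPolynomial (Fin 3) ℂ) ^ N ∈ I₀ := by
    intro i
    have hle : n i ≤ N := Finset.le_sup (Finset.mem_univ i)
    have : (X i : MvPolynomial (Fin 3) ℂ) ^ N
        = X i ^ (N - n i) * X i ^ (n i) := by
      rw [← pow_add, Nat.sub_add_cancel hle]
    rw [this]
    exact Ideal.mul_mem_left _ _ (hn i)
  refine ⟨3 * N + 1, by omega, ?_⟩
  -- first: every monomial of degree `3N+1` is in the ideal
  have hmono : ∀ d : Fin 3 →₀ ℕ, Finsupp.degree d = 3 * N + 1 →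
      (monomial d (1 : ℂ)) ∈ I₀ := by
    intro d hd
    have hex : ∃ i : Fin 3, N < d i := by
      by_contra hcon
      push_neg at hcon
      have : Finsupp.degree d ≤ 3 * N := by
        have h1 : Finsupp.degree d = ∑ i ∈ d.support, d i := rfl
        have h2 : ∑ i ∈ d.support, d i ≤ ∑ i : Fin 3, d i :=
          Finset.sum_le_sum_of_subset (Finset.subset_univ _)
        have h3 : ∑ i : Fin 3, d i ≤ ∑ _i : Fin 3, N :=
          Finset.sum_le_sum fun i _ => hcon i
        simp only [Finset.sum_const, Finset.card_univ, Fintype.card_fin, smul_eq_mul] at h3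
        omega
      omega
    obtain ⟨i, hi⟩ := hex
    have hle : Finsupp.single i N ≤ d := by
      rw [Finsupp.single_le_iff]; omega
    have hsplit : (monomial d (1 : ℂ))
        = monomial (d - Finsupp.single i N) 1 * X i ^ N := by
      rw [X_pow_eq_monomial, monomial_mul, mul_one, tsub_add_cancel_of_le hle]
    rw [hsplit]
    exact Ideal.mul_mem_left _ _ (hXN i)
  intro w hw
  rw [← support_sum_monomial_coeff w]
  apply Ideal.sum_mem
  intro d hd
  have hcoeff : coeff d w ≠ 0 := mem_support_iff.mp hd
  have hdeg : Finsupp.degree d = 3 * N + 1 := by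
    have := hw hcoeff
    rwa [Finsupp.degree_eq_weight_one]
  have : (monomial d (coeff d w)) = C (coeff d w) * monomial d 1 := by
    rw [C_mul_monomial, mul_one]
  rw [this]
  exact Ideal.mul_mem_left _ _ (hmono d hdeg)

variable (D : ℕ)

/-- The linear map `(a₀,a₁,a₂) ↦ (degree-D part of) ∑ aᵢ Pᵢ`. -/
noncomputable def Phi (P : Fin 3 → MvPolynomial (Fin 3) ℂ) :
    (Fin 3 → MvPolynomial (Fin 3) ℂ) →ₗ[ℂ] homogeneousSubmodule (Fin 3) ℂ D :=
  LinearMap.codRestrict _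
    ((homogeneousComponent D).comp
      (∑ i : Fin 3, (LinearMap.mulRight ℂ (P i)).comp (LinearMap.proj i)))
    (fun _ => homogeneousComponent_mem _ _)

lemma Phi_apply (P : Fin 3 → MvPolynomial (Fin 3) ℂ) (a : Fin 3 → MvPolynomial (Fin 3) ℂ) :
    (Phi D P a : MvPolynomial (Fin 3) ℂ)
      = homogeneousComponent D (∑ i : Fin 3, a i * P i) := by
  simp [Phi, LinearMap.codRestrict, LinearMap.sum_apply]

lemma Phi_add_smul (P Q : Fin 3 → MvPolynomial (Fin 3) ℂ) (t : ℂ) :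
    Phi D (fun i => P i + t • Q i) = Phi D P + t • Phi D Q := by
  apply LinearMap.ext
  intro a
  apply Subtype.ext
  rw [Phi_apply]
  have : ((Phi D P + t • Phi D Q) a : MvPolynomial (Fin 3) ℂ)
      = (Phi D P a : MvPolynomial (Fin 3) ℂ) + t • (Phi D Q a : MvPolynomial (Fin 3) ℂ) := rfl
  rw [this, Phi_apply, Phi_apply]
  rw [← map_smul, ← map_add]
  congr 1
  rw [Finset.smul_sum, ← Finset.sum_add_distrib]
  refine Finset.sum_congr rfl fun i _ => ?_
  rw [mul_add, mul_smul_comm]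

instance instFDW (D : ℕ) : FiniteDimensional ℂ (homogeneousSubmodule (Fin 3) ℂ D) :=
  Submodule.finiteDimensional_of_le (S₂ := restrictTotalDegree (Fin 3) ℂ D)
    (fun p hp => (mem_restrictTotalDegree _ _ _).mpr
      (MvPolynomial.IsHomogeneous.totalDegree_le hp))


end PencilAux

open PencilAux

theorem pencil_member_smooth_for_all_but_finitely_many'
    (F G : MvPolynomial (Fin 3) ℂ)
    (hFhom : F.IsHomogeneous 3) (hGhom : G.IsHomogeneous 3)
    (hFsm : ∀ v : Fin 3 → ℂ, (fun i => eval v (pderiv i F)) = 0 → v = 0) :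
    {t : ℂ | ¬ (((F + C t * G) ≠ 0 ∧ (F + C t * G).IsHomogeneous 3) ∧
        ∀ v : Fin 3 → ℂ, (fun i => eval v (pderiv i (F + C t * G))) = 0 → v = 0)}.Finite := by
  classical
  obtain ⟨D, hD1, hDideal⟩ := exists_degree_ideal F hFsm
  set PF : Fin 3 → MvPolynomial (Fin 3) ℂ := fun i => pderiv i F with hPF
  set PG : Fin 3 → MvPolynomial (Fin 3) ℂ := fun i => pderiv i G with hPG
  -- surjectivity of `Phi D PF`
  have hsurj : Function.Surjective (Phi D PF) := by
    rintro ⟨w, hw⟩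
    have hwI : w ∈ Ideal.span (Set.range PF) :=
      hDideal w ((mem_homogeneousSubmodule _ _).mp hw)
    rw [Ideal.span, Submodule.mem_span_range_iff_exists_fun] at hwI
    obtain ⟨c, hc⟩ := hwI
    refine ⟨c, Subtype.ext ?_⟩
    rw [Phi_apply]
    simp only [smul_eq_mul] at hc
    rw [hc]
    rw [homogeneousComponent_of_mem hw, if_pos rfl]
  obtain ⟨s, hs⟩ := (Phi D PF).exists_rightInverse_of_surjective
    (LinearMap.range_eq_top.mpr hsurj)
  let W := homogeneousSubmodule (Fin 3) ℂ D
  let b := Module.finBasis ℂ W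
  set MA : Matrix _ _ ℂ := LinearMap.toMatrix b b ((Phi D PF).comp s) with hMA
  set MB : Matrix _ _ ℂ := LinearMap.toMatrix b b ((Phi D PG).comp s) with hMB
  set q : Polynomial ℂ :=
    (MA.map Polynomial.C + (Polynomial.X : Polynomial ℂ) • MB.map Polynomial.C).det with hq
  have hmat : ∀ t : ℂ, LinearMap.toMatrix b b (((Phi D PF) + t • (Phi D PG)).comp s)
      = MA + t • MB := by
    intro t
    rw [LinearMap.add_comp, LinearMap.smul_comp, LinearEquiv.map_add, LinearEquiv.map_smul,
      hMA, hMB]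
  have heval : ∀ t : ℂ, q.eval t
      = Matrix.det (LinearMap.toMatrix b b (((Phi D PF) + t • (Phi D PG)).comp s)) := by
    intro t
    rw [hmat t]
    have hm : (Polynomial.evalRingHom t).mapMatrix
        (MA.map Polynomial.C + (Polynomial.X : Polynomial ℂ) • MB.map Polynomial.C)
        = MA + t • MB := by
      ext i j
      simp only [RingHom.mapMatrix_apply, Matrix.map_apply, Matrix.add_apply, Matrix.smul_apply,
        smul_eq_mul, Polynomial.coe_evalRingHom, Polynomial.eval_add, Polynomial.eval_C,
        Polynomial.eval_mul, Polynomial.eval_X, Matrix.map_map]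
    rw [← hm, ← RingHom.map_det]
    rfl
  have hq0 : q.eval 0 = 1 := by
    rw [heval 0, zero_smul, add_zero, hs, LinearMap.toMatrix_id, Matrix.det_one]
  have hqne : q ≠ 0 := by
    intro h; rw [h] at hq0; simp at hq0
  apply Set.Finite.subset (Polynomial.finite_setOf_isRoot hqne)
  -- inclusion
  intro t ht
  simp only [Set.mem_setOf_eq] at ht ⊢
  by_contra hroot
  apply ht; clear ht
  -- `q.eval t ≠ 0` : the pencil member is smooth
  have hPt : (fun i => pderiv i (F + C t * G)) = fun i => PF i + t • PG i := by
    funext i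
    rw [map_add, hPF, hPG]
    simp only []
    congr 1
    rw [pderiv_C_mul, smul_eq_C_mul]
  -- surjectivity of Phi D (pencil gradient)
  set E : (Fin 3 → MvPolynomial (Fin 3) ℂ) →ₗ[ℂ] W := Phi D PF + t • Phi D PG with hE
  have hEsurj : Function.Surjective ⇑E := by
    have hdet : IsUnit (LinearMap.toMatrix b b (E.comp s)).det :=
      isUnit_iff_ne_zero.mpr (by rw [hE, ← heval t]; exact hroot)
    have hsurj2 : Function.Surjective ⇑(E.comp s) := by
      intro w
      set M := LinearMap.toMatrix b b (E.comp s) with hM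
      refine ⟨(Matrix.toLin b b M⁻¹) w, ?_⟩
      have h1 : (E.comp s) ((Matrix.toLin b b M⁻¹) w)
          = (Matrix.toLin b b M) ((Matrix.toLin b b M⁻¹) w) := by
        rw [hM, Matrix.toLin_toMatrix]
      rw [h1, ← LinearMap.comp_apply, ← Matrix.toLin_mul,
        Matrix.mul_nonsing_inv _ hdet, Matrix.toLin_one, LinearMap.id_apply]
    intro w
    obtain ⟨u, hu⟩ := hsurj2 w
    exact ⟨s u, hu⟩
  have hsurj' : Function.Surjective (Phi D (fun i => pderiv i (F + C t * G))) := by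
    rw [hPt, Phi_add_smul]; exact hEsurj
  -- main smoothness claim
  have hsm : ∀ v : Fin 3 → ℂ, (fun i => eval v (pderiv i (F + C t * G))) = 0 → v = 0 := by
    intro v hv
    by_contra hv0
    obtain ⟨j, hj⟩ : ∃ j, v j ≠ 0 := by
      by_contra hall; push_neg at hall; exact hv0 (funext hall)
    have hXmem : (X j : MvPolynomial (Fin 3) ℂ) ^ D ∈ homogeneousSubmodule (Fin 3) ℂ D := by
      rw [mem_homogeneousSubmodule]
      simpa using isHomogeneous_X_pow (R := ℂ) j D
    obtain ⟨a, ha⟩ := hsurj' ⟨_, hXmem⟩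
    have ha' : homogeneousComponent D (∑ i : Fin 3, a i * pderiv i (F + C t * G))
        = (X j : MvPolynomial (Fin 3) ℂ) ^ D := by
      rw [← Phi_apply, ha]
    have hHhom : (F + C t * G).IsHomogeneous 3 := by
      apply hFhom.add
      simpa using (isHomogeneous_C (σ := Fin 3) t).mul hGhom
    have hvan : ∀ c : ℂ, eval (c • v) (∑ i : Fin 3, a i * pderiv i (F + C t * G)) = 0 := by
      intro c
      rw [map_sum]
      apply Finset.sum_eq_zero
      intro i _
      rw [map_mul]
      have h2 : (pderiv i (F + C t * G)).IsHomogeneous 2 := by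
        simpa using isHomogeneous_pderiv hHhom i
      rw [eval_smul_of_isHomogeneous _ 2 h2 c v]
      have : eval v (pderiv i (F + C t * G)) = 0 := congrFun hv i
      rw [this]; ring
    have := eval_homogeneousComponent_eq_zero _ v hvan D
    rw [ha'] at this
    rw [map_pow, eval_X] at this
    exact hj (pow_eq_zero_iff (by omega)|>.mp this)
  have hHne : F + C t * G ≠ 0 := by
    intro h0
    have : (fun _ : Fin 3 => (1 : ℂ)) = 0 := by
      apply hsm
      funext i
      rw [h0]
      simp
    exact one_ne_zero (congrFun this 0)
  have hHhom : (F + C t * G).IsHomogeneous 3 := by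
    apply hFhom.add
    simpa using (isHomogeneous_C (σ := Fin 3) t).mul hGhom
  exact ⟨⟨hHne, hHhom⟩, hsm⟩


/-- For all but finitely many `t ∈ ℂ`, the member `F + t • G` of the pencil
spanned by two smooth cubics meeting transversally in nine points is a smooth
cubic. -/
theorem pencil_member_smooth_for_all_but_finitely_many
    (F G : MvPolynomial (Fin 3) ℂ) (hF : SmoothCubic F) (hG : SmoothCubic G)
    (p : Fin 9 → Fin 3 → ℂ) (hp : NinePoints F G p)
    (htrans : ∀ i, Transverse F G (p i)) :
    {t : ℂ | ¬ SmoothCubic (F + C t * G)}.Finite := by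
  have h := pencil_member_smooth_for_all_but_finitely_many' F G hF.1.2 hG.1.2
    (fun v hv => hF.2 v hv)
  exact h
end

section
/- Let A = ℂ[Y₁,Y₂,Y₃]/(Y₁² + Y₂² − Y₃²) and let σ be the ℂ-algebra automorphism of A induced by Yᵢ ↦ −Yᵢ for i = 1,2,3. Let B = ℂ[u,v] and let τ be the ℂ-algebra automorphism of B determined by u ↦ iu, v ↦ iv (where i is a primitive fourth root of unity in ℂ). Then the fixed subalgebra of A under σ is isomorphic as a ℂ-algebra to the fixed subalgebra of B under τ. (This is the algebraic content of the assertion that the bidouble cover of ℂ² branched over three smooth curves through a common point with pairwise transverse intersections has a cyclic quotient singularity of type ¼(1,1).) -/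
open MvPolynomial

/-- The fixed subalgebra of a `ℂ`-algebra automorphism. -/
def fixedSubalgebra {R : Type*} [CommSemiring R] [Algebra ℂ R]
    (φ : R ≃ₐ[ℂ] R) : Subalgebra ℂ R :=
  AlgHom.equalizer (φ : R →ₐ[ℂ] R) (AlgHom.id ℂ R)

/-- The quotient `A = ℂ[Y₁,Y₂,Y₃]/(Y₁² + Y₂² − Y₃²)`. -/
abbrev ConeAlg : Type :=
  MvPolynomial (Fin 3) ℂ ⧸
    Ideal.span ({X 0 ^ 2 + X 1 ^ 2 - X 2 ^ 2} : Set (MvPolynomial (Fin 3) ℂ))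

noncomputable section BidoubleAux

namespace BidoubleAux

abbrev B2 : Type := MvPolynomial (Fin 2) ℂ

def Gq : MvPolynomial (Fin 3) ℂ := X 0 ^ 2 + X 1 ^ 2 - X 2 ^ 2

def Φvals : Fin 3 → B2 :=
  ![X 0 ^ 2 + X 1 ^ 2, C Complex.I * (X 1 ^ 2 - X 0 ^ 2), C 2 * (X 0 * X 1)]

def Φ₀ : MvPolynomial (Fin 3) ℂ →ₐ[ℂ] B2 := aeval Φvals

lemma hI2 : (C Complex.I : B2) ^ 2 = -1 := by
  rw [← C_pow, Complex.I_sq, map_neg, map_one]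

lemma hC2 : (C 2 : B2) = 2 := by
  rw [show (2:ℂ) = 1+1 by norm_num, map_add, map_one]; norm_num

lemma Φ₀_G : Φ₀ Gq = 0 := by
  simp only [Gq, Φ₀, Φvals, map_add, map_sub, map_pow, map_mul, aeval_X,
    Matrix.cons_val_zero, Matrix.cons_val_one, Matrix.head_cons,
    Matrix.cons_val_two, Matrix.tail_cons]
  ring_nf
  rw [hI2, hC2]
  ring

def gv : Fin 2 → B2 := ![C Complex.I * (X 1 ^ 2 - X 0 ^ 2), X 0 ^ 2 + X 1 ^ 2]

def g : MvPolynomial (Fin 2) ℂ →ₐ[ℂ] B2 := aeval gv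

lemma eval_g (x : Fin 2 → ℂ) (c : MvPolynomial (Fin 2) ℂ) :
    eval x (g c) = eval (fun i => eval x (gv i)) c := by
  rw [g, aeval_def, eval_eval₂]
  have h : (eval x).comp (algebraMap ℂ B2) = RingHom.id ℂ := by
    ext r
    simp [MvPolynomial.algebraMap_eq]
  rw [h, eval₂_id]

lemma gv_eval (x : Fin 2 → ℂ) :
    (fun i => eval x (gv i)) = ![Complex.I * ((x 1)^2 - (x 0)^2), (x 0)^2 + (x 1)^2] := by
  funext i
  fin_cases i <;> simp [gv]

lemma eval_g' (x : Fin 2 → ℂ) (c : MvPolynomial (Fin 2) ℂ) :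
    eval x (g c) = eval ![Complex.I * ((x 1)^2 - (x 0)^2), (x 0)^2 + (x 1)^2] c := by
  rw [eval_g, gv_eval]

lemma g_inj : Function.Injective g := by
  intro c c' h
  apply MvPolynomial.funext
  intro y
  obtain ⟨z0, hz0⟩ := IsAlgClosed.exists_pow_nat_eq (k := ℂ) ((y 1 + Complex.I * y 0)/2) two_pos
  obtain ⟨z1, hz1⟩ := IsAlgClosed.exists_pow_nat_eq (k := ℂ) ((y 1 - Complex.I * y 0)/2) two_pos
  have key : (![Complex.I * ((![z0, z1] 1)^2 - (![z0, z1] 0)^2),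
      (![z0, z1] 0)^2 + (![z0, z1] 1)^2] : Fin 2 → ℂ) = y := by
    funext i
    fin_cases i
    · simp only [Fin.zero_eta, Matrix.cons_val_zero, Matrix.cons_val_one, Matrix.head_cons, hz0, hz1]
      field_simp
      linear_combination (norm := ring_nf) (-2 * y 0) * Complex.I_sq
    · simp only [Fin.mk_one, Matrix.cons_val_one, Matrix.cons_val_zero, Matrix.head_cons, hz0, hz1]
      ring
  have := congrArg (eval ![z0, z1]) h
  rwa [eval_g', eval_g', key] at this

lemma g_separate (a b : MvPolynomial (Fin 2) ℂ)
    (h : g a + g b * (C 2 * (X 0 * X 1)) = 0) : a = 0 ∧ b = 0 := by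
  have hga : g a = 0 := by
    apply MvPolynomial.funext (q := 0)
    intro x
    have h1 := congrArg (eval x) h
    have h2 := congrArg (eval ![-(x 0), x 1]) h
    simp only [map_add, map_mul, eval_C, eval_X, map_zero, eval_g',
      Matrix.cons_val_zero, Matrix.cons_val_one, Matrix.head_cons, neg_sq] at h1 h2 ⊢
    linear_combination (h1 + h2) / 2
  have hb : g b * (C 2 * (X 0 * X 1)) = 0 := by rwa [hga, zero_add] at h
  have hne : (C 2 * (X 0 * X 1) : B2) ≠ 0 := by
    refine mul_ne_zero ?_ (mul_ne_zero (X_ne_zero _) (X_ne_zero _))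
    intro h'
    have := congrArg (eval ![1, 1]) h'
    simp at this
  refine ⟨g_inj (by rw [hga, map_zero]), g_inj ?_⟩
  rw [map_zero]
  exact (mul_eq_zero.mp hb).resolve_right hne

def e : MvPolynomial (Fin 3) ℂ ≃ₐ[ℂ] Polynomial (MvPolynomial (Fin 2) ℂ) :=
  (renameEquiv ℂ (Equiv.swap (0 : Fin 3) 2)).trans (MvPolynomial.finSuccEquiv ℂ 2)

lemma e_X0 : e (X 0) = Polynomial.C (X 1) := by
  have h1 : (Equiv.swap (0 : Fin 3) 2) 0 = 2 := Equiv.swap_apply_left 0 2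
  have h2 : (X (2 : Fin 3) : MvPolynomial (Fin 3) ℂ) = X (Fin.succ 1) := rfl
  simp [e, rename_X, h1, h2, finSuccEquiv_X_succ]

lemma e_X1 : e (X 1) = Polynomial.C (X 0) := by
  have h1 : (Equiv.swap (0 : Fin 3) 2) 1 = 1 := by decide
  have h2 : (X (1 : Fin 3) : MvPolynomial (Fin 3) ℂ) = X (Fin.succ 0) := rfl
  simp [e, rename_X, h1, h2, finSuccEquiv_X_succ]

lemma e_X2 : e (X 2) = Polynomial.X := by
  have h1 : (Equiv.swap (0 : Fin 3) 2) 2 = 0 := Equiv.swap_apply_right 0 2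
  simp [e, rename_X, h1, finSuccEquiv_X_zero]

def sq2 : MvPolynomial (Fin 2) ℂ := X 0 ^ 2 + X 1 ^ 2

def qq : Polynomial (MvPolynomial (Fin 2) ℂ) := Polynomial.X ^ 2 - Polynomial.C sq2

lemma e_G : e Gq = -qq := by
  rw [Gq, qq, sq2, map_sub, map_add, map_pow, map_pow, map_pow, e_X0, e_X1, e_X2,
    map_add, map_pow, map_pow]
  ring

def ev : Polynomial (MvPolynomial (Fin 2) ℂ) →+* B2 :=
  Polynomial.eval₂RingHom (g : MvPolynomial (Fin 2) ℂ →+* B2) (C 2 * (X 0 * X 1))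

lemma ev_e : ∀ f, Φ₀ f = ev (e f) := by
  have h : (Φ₀ : MvPolynomial (Fin 3) ℂ →+* B2) =
      ev.comp (e : MvPolynomial (Fin 3) ℂ →+* Polynomial (MvPolynomial (Fin 2) ℂ)) := by
    apply MvPolynomial.ringHom_ext
    · intro r
      simp only [RingHom.coe_comp, Function.comp_apply, RingHom.coe_coe]
      rw [show (C r : MvPolynomial (Fin 3) ℂ) = algebraMap ℂ _ r from rfl,
        AlgEquiv.commutes, AlgHom.commutes]
      simp [ev, MvPolynomial.algebraMap_eq, g]
    · intro i
      fin_cases i <;>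
        simp [ev, e_X0, e_X1, e_X2, Φ₀, Φvals, g, gv]
  intro f
  exact congrFun (congrArg (fun (h : _ →+* _) => h.toFun) h) f

lemma ev_qq : ev qq = 0 := by
  have h1 : ev qq = (C 2 * (X 0 * X 1))^2 - g sq2 := by
    simp only [ev, qq, Polynomial.coe_eval₂RingHom, Polynomial.eval₂_sub, Polynomial.eval₂_pow,
      Polynomial.eval₂_X, Polynomial.eval₂_C, RingHom.coe_coe]
  rw [h1]
  simp only [g, sq2, map_add, map_pow, aeval_X, gv,
    Matrix.cons_val_zero, Matrix.cons_val_one, Matrix.head_cons]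
  ring_nf
  rw [show (C Complex.I : B2) ^ 2 = -1 by rw [← C_pow, Complex.I_sq, map_neg, map_one],
    show (C 2 : B2) = 2 by rw [show (2:ℂ) = 1+1 by norm_num, map_add, map_one]; norm_num]
  ring

lemma qq_monic : qq.Monic := Polynomial.monic_X_pow_sub_C _ (two_ne_zero)

lemma ker_le (f : MvPolynomial (Fin 3) ℂ) (hf : Φ₀ f = 0) :
    f ∈ Ideal.span ({Gq} : Set (MvPolynomial (Fin 3) ℂ)) := by
  set P := e f with hPdef
  have hP : ev P = 0 := by rw [← ev_e]; exact hf
  have hdiv := Polynomial.modByMonic_add_div P qq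
  have hq1 : qq ≠ 1 := by
    intro h'
    have := congrArg Polynomial.natDegree h'
    rw [qq, Polynomial.natDegree_X_pow_sub_C, Polynomial.natDegree_one] at this
    omega
  have hdeg : (P %ₘ qq).degree ≤ 1 := by
    have h2 := Polynomial.natDegree_modByMonic_lt P qq_monic hq1
    rw [qq, Polynomial.natDegree_X_pow_sub_C] at h2
    exact Polynomial.degree_le_natDegree.trans (by exact_mod_cast Nat.lt_succ_iff.mp h2)
  have hr := Polynomial.eq_X_add_C_of_degree_le_one hdeg
  set a := (P %ₘ qq).coeff 0
  set b := (P %ₘ qq).coeff 1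
  have hevr : ev (P %ₘ qq) = 0 := by
    have h3 : ev P = ev (P %ₘ qq) + ev qq * ev (P /ₘ qq) := by
      rw [← map_mul, ← map_add, hdiv]
    rw [hP, ev_qq, zero_mul, add_zero] at h3
    exact h3.symm
  have h0 : g a + g b * (C 2 * (X 0 * X 1)) = 0 := by
    rw [hr] at hevr
    simp only [ev, Polynomial.coe_eval₂RingHom, Polynomial.eval₂_add, Polynomial.eval₂_mul,
      Polynomial.eval₂_C, Polynomial.eval₂_X, RingHom.coe_coe] at hevr
    linear_combination hevr
  obtain ⟨ha, hb⟩ := g_separate a b h0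
  have hr0 : P %ₘ qq = 0 := by rw [hr, ha, hb]; simp
  rw [hr0, zero_add] at hdiv
  rw [Ideal.mem_span_singleton']
  refine ⟨-(e.symm (P /ₘ qq)), ?_⟩
  have hqG : e.symm qq = -Gq := by
    have h6 := congrArg e.symm e_G
    rw [AlgEquiv.symm_apply_apply, map_neg] at h6
    linear_combination h6
  have hf' : f = e.symm P := (e.symm_apply_apply f).symm
  have h5 : e.symm P = e.symm qq * e.symm (P /ₘ qq) := by
    conv_lhs => rw [← hdiv]
    rw [map_mul]
  rw [hf', h5, hqG]
  ring

def Φb : ConeAlg →ₐ[ℂ] B2 :=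
  Ideal.Quotient.liftₐ _ Φ₀ (by
    intro a ha
    rw [Ideal.mem_span_singleton'] at ha
    obtain ⟨c, rfl⟩ := ha
    have h0 := Φ₀_G
    rw [Gq] at h0
    rw [map_mul, h0, mul_zero])

lemma Φb_mk (f : MvPolynomial (Fin 3) ℂ) :
    Φb (Ideal.Quotient.mk _ f) = Φ₀ f := rfl

lemma Φb_inj : Function.Injective Φb := by
  intro x y hxy
  obtain ⟨f, rfl⟩ := Ideal.Quotient.mk_surjective x
  obtain ⟨f', rfl⟩ := Ideal.Quotient.mk_surjective y
  rw [Φb_mk, Φb_mk] at hxy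
  rw [Ideal.Quotient.eq]
  have h := ker_le (f - f') (by rw [map_sub, hxy, sub_self])
  rw [Gq] at h
  exact h

/-! ### the τ side -/

def w : Fin 2 → B2 := fun j => C Complex.I * X j

lemma aeval_w_monomial (d : Fin 2 →₀ ℕ) (r : ℂ) :
    aeval w (monomial d r) = monomial d (Complex.I ^ (d 0 + d 1) * r) := by
  rw [aeval_monomial, monomial_eq]
  have h1 : (d.prod fun i k => (w i) ^ k) =
      (d.prod fun i k => (C (Complex.I ^ k) : B2)) * (d.prod fun i k => (X i) ^ k) := by
    rw [← Finsupp.prod_mul]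
    apply Finsupp.prod_congr
    intro i _
    rw [w, mul_pow, C_pow]
  have h2 : (d.prod fun i k => (C (Complex.I ^ k) : B2)) =
      C (Complex.I ^ (d 0 + d 1)) := by
    rw [← map_finsuppProd]
    congr 1
    rw [Finsupp.prod_fintype _ _ (fun i => pow_zero _), Fin.prod_univ_two,
      ← pow_add]
  rw [h1, h2]
  rw [show (algebraMap ℂ B2) r = C r from rfl, map_mul]
  ring

lemma coeff_aeval_w (b : B2) (m : Fin 2 →₀ ℕ) :
    coeff m (aeval w b) = Complex.I ^ (m 0 + m 1) * coeff m b := by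
  conv_lhs => rw [b.as_sum]
  rw [map_sum, coeff_sum]
  simp_rw [aeval_w_monomial, coeff_monomial]
  rw [Finset.sum_ite_eq' b.support m (fun d => Complex.I ^ (d 0 + d 1) * coeff d b)]
  by_cases h : m ∈ b.support
  · rw [if_pos h]
  · rw [if_neg h, notMem_support_iff.mp h, mul_zero]

lemma even_support (b : B2) (hb : aeval w b = b) :
    ∀ d ∈ b.support, Even (d 0 + d 1) := by
  intro d hd
  have h1 := coeff_aeval_w b d
  rw [hb] at h1
  have h2 : coeff d b ≠ 0 := mem_support_iff.mp hd
  have h3 : Complex.I ^ (d 0 + d 1) = 1 := by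
    have h5 : (Complex.I ^ (d 0 + d 1) - 1) * coeff d b = 0 := by linear_combination -h1
    rcases mul_eq_zero.mp h5 with h5 | h5
    · linear_combination h5
    · exact absurd h5 h2
  have h4 : ((-1 : ℂ)) ^ (d 0 + d 1) = 1 := by
    calc ((-1 : ℂ)) ^ (d 0 + d 1) = (Complex.I ^ 2) ^ (d 0 + d 1) := by rw [Complex.I_sq]
    _ = (Complex.I ^ (d 0 + d 1)) ^ 2 := by rw [← pow_mul, ← pow_mul, mul_comm]
    _ = 1 := by rw [h3, one_pow]
  exact neg_one_pow_eq_one_iff_even (by norm_num : (-1 : ℂ) ≠ 1) |>.mp h4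

lemma pow_mem_adjoin (i j : ℕ) (hev : Even (i + j)) :
    (X 0 : B2) ^ i * X 1 ^ j ∈
      Algebra.adjoin ℂ ({X 0 ^ 2, X 1 ^ 2, X 0 * X 1} : Set B2) := by
  have hu : (X 0 ^ 2 : B2) ∈ Algebra.adjoin ℂ ({X 0 ^ 2, X 1 ^ 2, X 0 * X 1} : Set B2) :=
    Algebra.subset_adjoin (by simp)
  have hv : (X 1 ^ 2 : B2) ∈ Algebra.adjoin ℂ ({X 0 ^ 2, X 1 ^ 2, X 0 * X 1} : Set B2) :=
    Algebra.subset_adjoin (by simp)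
  have huv : (X 0 * X 1 : B2) ∈ Algebra.adjoin ℂ ({X 0 ^ 2, X 1 ^ 2, X 0 * X 1} : Set B2) :=
    Algebra.subset_adjoin (by simp)
  rcases Nat.even_or_odd i with hi | hi
  · have hj : Even j := by
      rcases Nat.even_or_odd j with h | h
      · exact h
      · exact absurd (Nat.even_add.mp hev) (by simp [Nat.not_even_iff_odd.mpr h, hi])
    obtain ⟨k, hk⟩ := hi
    obtain ⟨l, hl⟩ := hj
    have : (X 0 : B2) ^ i * X 1 ^ j = (X 0 ^ 2) ^ k * (X 1 ^ 2) ^ l := by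
      rw [hk, hl, ← pow_mul, ← pow_mul]; ring
    rw [this]
    exact mul_mem (pow_mem hu k) (pow_mem hv l)
  · have hj : Odd j := by
      rcases Nat.even_or_odd j with h | h
      · exact absurd (Nat.even_add.mp hev) (by simp [h, Nat.not_even_iff_odd.mpr hi])
      · exact h
    obtain ⟨k, hk⟩ := hi
    obtain ⟨l, hl⟩ := hj
    have : (X 0 : B2) ^ i * X 1 ^ j = (X 0 * X 1) * ((X 0 ^ 2) ^ k * (X 1 ^ 2) ^ l) := by
      rw [hk, hl, ← pow_mul, ← pow_mul]; ring
    rw [this]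
    exact mul_mem huv (mul_mem (pow_mem hu k) (pow_mem hv l))

lemma mem_adjoin_of_even (b : B2) (hev : ∀ d ∈ b.support, Even (d 0 + d 1)) :
    b ∈ Algebra.adjoin ℂ ({X 0 ^ 2, X 1 ^ 2, X 0 * X 1} : Set B2) := by
  rw [b.as_sum]
  apply Subalgebra.sum_mem
  intro d hd
  have hmono : (monomial d (coeff d b) : B2) = C (coeff d b) * ((X 0) ^ (d 0) * (X 1) ^ (d 1)) := by
    rw [monomial_eq]
    congr 1
    rw [Finsupp.prod_fintype _ _ (fun i => pow_zero _), Fin.prod_univ_two]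
  rw [hmono]
  exact mul_mem (Subalgebra.algebraMap_mem _ (coeff d b)) (pow_mem_adjoin _ _ (hev d hd))

/-! ### generators are in the range of Φb -/

lemma hgen0 : Φ₀ (X 0 + C Complex.I * X 1) = 2 * X 0 ^ 2 := by
  simp only [Φ₀, Φvals, map_add, map_mul, aeval_X, aeval_C,
    Matrix.cons_val_zero, Matrix.cons_val_one, Matrix.head_cons,
    show (algebraMap ℂ B2) Complex.I = C Complex.I from rfl]
  ring_nf
  rw [hI2]
  ring

lemma hgen1 : Φ₀ (X 0 - C Complex.I * X 1) = 2 * X 1 ^ 2 := by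
  simp only [Φ₀, Φvals, map_add, map_sub, map_mul, aeval_X, aeval_C,
    Matrix.cons_val_zero, Matrix.cons_val_one, Matrix.head_cons,
    show (algebraMap ℂ B2) Complex.I = C Complex.I from rfl]
  ring_nf
  rw [hI2]
  ring

lemma hgen2 : Φ₀ (X 2) = 2 * (X 0 * X 1) := by
  simp only [Φ₀, Φvals, aeval_X, Matrix.cons_val_two, Matrix.tail_cons, Matrix.head_cons]
  rw [hC2]

lemma aeval_w_Φvals (i : Fin 3) : aeval w (Φvals i) = -Φvals i := by
  have key : ∀ z : ℂ, (algebraMap ℂ B2) z = C z := fun z => rfl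
  have hI3 : (C Complex.I : B2) ^ 3 = -C Complex.I := by
    rw [pow_succ, hI2]; ring
  fin_cases i
  · simp [Φvals, w, key]
    ring_nf
    rw [hI2]
    ring
  · simp [Φvals, w, key]
    ring_nf
    rw [hI3]
    ring
  · simp [Φvals, w, key]
    ring_nf
    rw [hI2]
    ring

lemma half_smul (x : B2) : ((1/2 : ℂ)) • (2 * x) = x := by
  rw [Algebra.smul_def, MvPolynomial.algebraMap_eq, ← hC2, ← mul_assoc, ← C_mul]
  norm_num

lemma adjoin_le_range :
    Algebra.adjoin ℂ ({X 0 ^ 2, X 1 ^ 2, X 0 * X 1} : Set B2) ≤ Φb.range := by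
  apply Algebra.adjoin_le
  rintro x (rfl | rfl | rfl)
  · exact ⟨Ideal.Quotient.mk _ ((1/2 : ℂ) • (X 0 + C Complex.I * X 1)), by
      show Φb (Ideal.Quotient.mk _ _) = _
      rw [Φb_mk, map_smul, hgen0, half_smul]⟩
  · exact ⟨Ideal.Quotient.mk _ ((1/2 : ℂ) • (X 0 - C Complex.I * X 1)), by
      show Φb (Ideal.Quotient.mk _ _) = _
      rw [Φb_mk, map_smul, hgen1, half_smul]⟩
  · exact ⟨Ideal.Quotient.mk _ ((1/2 : ℂ) • (X 2 : MvPolynomial (Fin 3) ℂ)), by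
      show Φb (Ideal.Quotient.mk _ _) = _
      rw [Φb_mk, map_smul, hgen2, half_smul]⟩

end BidoubleAux

end BidoubleAux

open BidoubleAux

/-- The fixed subalgebra of `ℂ[Y₁,Y₂,Y₃]/(Y₁²+Y₂²−Y₃²)` under `Yᵢ ↦ −Yᵢ` is
isomorphic to the fixed subalgebra of `ℂ[u,v]` under `u ↦ iu, v ↦ iv`, i.e.
the bidouble cover point is a `¼(1,1)` cyclic quotient singularity. -/
theorem bidouble_cover_is_quarter_one_one
    (σ : ConeAlg ≃ₐ[ℂ] ConeAlg)
    (hσ : ∀ i : Fin 3,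
      σ (Ideal.Quotient.mk _ (X i)) = Ideal.Quotient.mk _ (-(X i)))
    (τ : MvPolynomial (Fin 2) ℂ ≃ₐ[ℂ] MvPolynomial (Fin 2) ℂ)
    (hτu : τ (X 0) = C Complex.I * X 0)
    (hτv : τ (X 1) = C Complex.I * X 1) :
    Nonempty ((fixedSubalgebra σ) ≃ₐ[ℂ] (fixedSubalgebra τ)) := by
  classical
  -- τ is the scaling substitution
  have hw : ∀ p : B2, τ p = aeval w p := by
    have hτ : (τ : B2 →ₐ[ℂ] B2) = aeval w := by
      apply MvPolynomial.algHom_ext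
      intro i
      fin_cases i
      · simpa [w] using hτu
      · simpa [w] using hτv
    intro p
    exact congrFun (congrArg (DFunLike.coe (F := B2 →ₐ[ℂ] B2)) hτ) p
  -- commutation Φb ∘ σ = τ ∘ Φb
  have hcomm : ∀ x : ConeAlg, Φb (σ x) = τ (Φb x) := by
    have hAlg : (Φb.comp (σ : ConeAlg →ₐ[ℂ] ConeAlg)).comp
          (Ideal.Quotient.mkₐ ℂ _) =
        ((τ : B2 →ₐ[ℂ] B2).comp Φb).comp (Ideal.Quotient.mkₐ ℂ _) := by
      have hσ' : ∀ i : Fin 3, (σ : ConeAlg →ₐ[ℂ] ConeAlg) (Ideal.Quotient.mk _ (X i)) =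
          Ideal.Quotient.mk _ (-(X i)) := hσ
      have hw' : ∀ p : B2, (τ : B2 →ₐ[ℂ] B2) p = aeval w p := hw
      apply MvPolynomial.algHom_ext
      intro i
      simp only [AlgHom.comp_apply, Ideal.Quotient.mkₐ_eq_mk]
      rw [hσ' i]
      rw [Φb_mk, Φb_mk, hw', map_neg,
        show Φ₀ (X i) = Φvals i from by simp [Φ₀], aeval_w_Φvals]
    intro x
    obtain ⟨f, rfl⟩ := Ideal.Quotient.mk_surjective x
    have := congrFun (congrArg (DFunLike.coe) hAlg) f
    simpa using this
  -- the restricted map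
  have hmemT : ∀ x : ConeAlg, x ∈ fixedSubalgebra σ → Φb x ∈ fixedSubalgebra τ := by
    intro x hx
    rw [fixedSubalgebra, AlgHom.mem_equalizer] at hx ⊢
    show τ (Φb x) = Φb x
    rw [← hcomm]
    exact congrArg Φb hx
  let F : (fixedSubalgebra σ) →ₐ[ℂ] (fixedSubalgebra τ) :=
    (Φb.comp (fixedSubalgebra σ).val).codRestrict _ (fun x => hmemT x.1 x.2)
  have hFval : ∀ x : fixedSubalgebra σ, (F x : B2) = Φb x.1 := fun x => rfl
  refine ⟨AlgEquiv.ofBijective F ⟨?_, ?_⟩⟩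
  · intro x y hxy
    apply Subtype.ext
    apply Φb_inj
    have := congrArg Subtype.val hxy
    rwa [hFval, hFval] at this
  · rintro ⟨b, hb⟩
    have hτb : τ b = b := by
      rw [fixedSubalgebra, AlgHom.mem_equalizer] at hb
      simpa using hb
    have hbmem : b ∈ Φb.range :=
      adjoin_le_range (mem_adjoin_of_even b (even_support b (by rw [← hw]; exact hτb)))
    rw [AlgHom.mem_range] at hbmem
    obtain ⟨a, ha⟩ := hbmem
    have hσa : σ a = a := by
      apply Φb_inj
      rw [hcomm, ha, hτb]
    refine ⟨⟨a, ?_⟩, ?_⟩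
    · rw [fixedSubalgebra, AlgHom.mem_equalizer]
      exact hσa
    · apply Subtype.ext
      rw [hFval]
      exact ha
end

section
/- Let [b₁,…,b_r] be a list of integers, each ≥ 2, with HJ([b₁,…,b_r]) = dn²/(dna − 1) for positive integers d, n, a satisfying n ≥ 2, 0 < a < n and gcd(a, n) = 1. Then there exist positive integers n′, a′ with n′ ≥ 2, 0 < a′ < n′ and gcd(a′, n′) = 1 such that HJ([2, b₁, …, b_{r−1}, b_r + 1]) = d(n′)²/(dn′a′ − 1); and similarly there exist positive integers n″, a″ with n″ ≥ 2, 0 < a″ < n″ and gcd(a″, n″) = 1 such that HJ([b₁ + 1, b₂, …, b_r, 2]) = d(n″)²/(dn″a″ − 1). (That is, the class of T-strings is closed under the two blow-up operations, with the same d.) -/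
def HJ : List ℤ → ℚ
  | [] => 0
  | [b] => (b : ℚ)
  | b :: l => (b : ℚ) - 1 / HJ l

def IsClassT (l : List ℤ) : Prop :=
  (∀ b ∈ l, 2 ≤ b) ∧
  ∃ d n a : ℕ, 0 < d ∧ 2 ≤ n ∧ 0 < a ∧ a < n ∧ Nat.gcd a n = 1 ∧
    HJ l = (d * n ^ 2 : ℚ) / (d * n * a - 1)

def blowupL (l : List ℤ) : List ℤ :=
  2 :: (l.dropLast ++ [l.getLastD 0 + 1])

def blowupR (l : List ℤ) : List ℤ :=
  ((l.headI + 1) :: l.tail) ++ [2]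

def hjNum : List ℤ → ℤ
  | [] => 1
  | [b] => b
  | b :: c :: l => b * hjNum (c :: l) - hjNum l

def hjDen : List ℤ → ℤ
  | [] => 0
  | _ :: l => hjNum l

lemma hjNum_cons (b : ℤ) (l : List ℤ) :
    hjNum (b :: l) = b * hjNum l - hjDen l := by
  cases l <;> simp [hjNum, hjDen]

lemma hjDen_cons (b : ℤ) (l : List ℤ) : hjDen (b :: l) = hjNum l := rfl

lemma hj_pos : ∀ l : List ℤ, l ≠ [] → (∀ b ∈ l, 2 ≤ b) →
    1 ≤ hjDen l ∧ hjDen l < hjNum l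
  | [b], _, h => by
    have := h b (by simp)
    simp only [hjNum, hjDen]; omega
  | b :: c :: l, _, h => by
    obtain ⟨h1, h2⟩ := hj_pos (c :: l) (by simp)
      (fun x hx => h x (List.mem_cons_of_mem _ hx))
    have hb : 2 ≤ b := h b (by simp)
    rw [hjDen_cons b (c :: l), hjNum_cons b (c :: l)]
    constructor
    · omega
    · nlinarith
  termination_by l => l.length

lemma HJ_eq : ∀ l : List ℤ, l ≠ [] → (∀ b ∈ l, 2 ≤ b) →
    HJ l = (hjNum l : ℚ) / (hjDen l : ℚ)
  | [b], _, h => by simp [HJ, hjNum, hjDen]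
  | b :: c :: l, _, h => by
    have hmem : ∀ x ∈ c :: l, 2 ≤ x := fun x hx => h x (List.mem_cons_of_mem _ hx)
    obtain ⟨h1, h2⟩ := hj_pos (c :: l) (by simp) hmem
    have ih := HJ_eq (c :: l) (by simp) hmem
    have hp : (hjNum (c :: l) : ℚ) ≠ 0 := by exact_mod_cast (by omega : hjNum (c::l) ≠ 0)
    show (b : ℚ) - 1 / HJ (c :: l) = _
    rw [ih, hjNum_cons b (c :: l), hjDen_cons b (c :: l), one_div_div]
    push_cast
    field_simp
  termination_by l => l.length

lemma hj_inv : ∀ l : List ℤ, l ≠ [] → (∀ b ∈ l, 2 ≤ b) →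
    1 ≤ hjNum l.dropLast ∧ 0 ≤ hjDen l.dropLast ∧
    hjDen l.dropLast < hjNum l.dropLast ∧
    hjNum l.dropLast < hjNum l ∧ hjDen l.dropLast < hjDen l ∧
    hjDen l - hjDen l.dropLast ≤ hjNum l - hjNum l.dropLast ∧
    hjNum l.dropLast * hjDen l - hjNum l * hjDen l.dropLast = 1 ∧
    hjDen l < hjNum l
  | [b], _, h => by
    have := h b (by simp)
    simp only [List.dropLast_singleton, hjNum, hjDen]
    refine ⟨le_refl 1, le_refl 0, by omega, by omega, by omega, by omega, by ring, by omega⟩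
  | b :: c :: l, _, h => by
    obtain ⟨hs1, ht0, hts, hsp, htq, hdiff, hdet, hqp⟩ := hj_inv (c :: l) (by simp)
      (fun x hx => h x (List.mem_cons_of_mem _ hx))
    have hb : 2 ≤ b := h b (by simp)
    set p := hjNum (c :: l) with hp
    set q := hjDen (c :: l) with hq
    set s := hjNum (c :: l).dropLast with hs
    set t := hjDen (c :: l).dropLast with ht
    have hdl : (b :: c :: l).dropLast = b :: (c :: l).dropLast := rfl
    rw [hdl, hjNum_cons b (c :: l).dropLast, hjDen_cons b (c :: l).dropLast,
      hjNum_cons b (c :: l), hjDen_cons b (c :: l)]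
    rw [← hs, ← ht, ← hp, ← hq]
    have hm1 : 2 * p ≤ b * p := by nlinarith
    have hm2 : 2 * s ≤ b * s := by nlinarith
    have hm3 : 2 * p - 2 * s ≤ b * p - b * s := by nlinarith
    refine ⟨by nlinarith, by omega, by nlinarith, by nlinarith, by omega,
      by nlinarith, by linear_combination hdet, by nlinarith⟩
  termination_by l => l.length

lemma hj_append2 : ∀ l : List ℤ, l ≠ [] →
    hjNum (l ++ [2]) = 2 * hjNum l - hjNum l.dropLast ∧
    hjDen (l ++ [2]) = 2 * hjDen l - hjDen l.dropLast
  | [b], _ => by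
    show hjNum [b, 2] = _ ∧ hjDen [b, 2] = _
    simp [hjNum, hjDen]; ring
  | b :: c :: l, _ => by
    obtain ⟨ih1, ih2⟩ := hj_append2 (c :: l) (by simp)
    have hdl : (b :: c :: l).dropLast = b :: (c :: l).dropLast := rfl
    have happ : (b :: c :: l) ++ [2] = b :: ((c :: l) ++ [2]) := rfl
    rw [happ, hjNum_cons b ((c :: l) ++ [2]), hjDen_cons b ((c :: l) ++ [2]),
      ih1, ih2, hdl, hjNum_cons b (c :: l).dropLast, hjDen_cons b (c :: l).dropLast,
      hjNum_cons b (c :: l), hjDen_cons b (c :: l)]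
    constructor <;> ring
  termination_by l => l.length

lemma hj_lastBump : ∀ l : List ℤ, l ≠ [] →
    hjNum (l.dropLast ++ [l.getLastD 0 + 1]) = hjNum l + hjNum l.dropLast ∧
    hjDen (l.dropLast ++ [l.getLastD 0 + 1]) = hjDen l + hjDen l.dropLast
  | [b], _ => by
    show hjNum [b + 1] = _ ∧ hjDen [b + 1] = _
    simp [hjNum, hjDen]
  | b :: c :: l, _ => by
    obtain ⟨ih1, ih2⟩ := hj_lastBump (c :: l) (by simp)
    have hdl : (b :: c :: l).dropLast = b :: (c :: l).dropLast := rfl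
    have hlast : (b :: c :: l).getLastD 0 = (c :: l).getLastD 0 := by
      simp [List.getLastD_cons]
    have happ : (b :: c :: l).dropLast ++ [(b :: c :: l).getLastD 0 + 1]
        = b :: ((c :: l).dropLast ++ [(c :: l).getLastD 0 + 1]) := by
      rw [hdl, hlast]; rfl
    rw [happ, hjNum_cons b _, hjDen_cons b _, ih1, ih2, hdl,
      hjNum_cons b (c :: l).dropLast, hjDen_cons b (c :: l).dropLast,
      hjNum_cons b (c :: l), hjDen_cons b (c :: l)]
    constructor <;> ring
  termination_by l => l.length

lemma hj_blowupL (l : List ℤ) (hl : l ≠ []) :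
    hjNum (blowupL l) = 2 * (hjNum l + hjNum l.dropLast) - (hjDen l + hjDen l.dropLast) ∧
    hjDen (blowupL l) = hjNum l + hjNum l.dropLast := by
  obtain ⟨h1, h2⟩ := hj_lastBump l hl
  show hjNum (2 :: _) = _ ∧ hjDen (2 :: _) = _
  rw [hjNum_cons 2 _, hjDen_cons 2 _, h1, h2]
  constructor <;> ring

lemma hj_headBump : ∀ l : List ℤ, l ≠ [] →
    hjNum ((l.headI + 1) :: l.tail) = hjNum l + hjDen l ∧
    hjDen ((l.headI + 1) :: l.tail) = hjDen l ∧
    hjNum ((l.headI + 1) :: l.tail).dropLast = hjNum l.dropLast + hjDen l.dropLast ∧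
    hjDen ((l.headI + 1) :: l.tail).dropLast = hjDen l.dropLast
  | [b], _ => by
    simp only [List.headI, List.tail, List.dropLast]
    simp [hjNum, hjDen]
  | b :: c :: l, _ => by
    simp only [List.headI, List.tail_cons]
    have hdl1 : ((b + 1) :: c :: l).dropLast = (b + 1) :: (c :: l).dropLast := rfl
    have hdl2 : (b :: c :: l).dropLast = b :: (c :: l).dropLast := rfl
    rw [hjNum_cons (b+1) (c :: l), hjDen_cons (b+1) (c :: l),
      hjNum_cons b (c :: l), hjDen_cons b (c :: l), hdl1, hdl2,
      hjNum_cons (b+1) (c :: l).dropLast, hjDen_cons (b+1) (c :: l).dropLast,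
      hjNum_cons b (c :: l).dropLast, hjDen_cons b (c :: l).dropLast]
    refine ⟨by ring, rfl, by ring, rfl⟩

lemma hj_blowupR (l : List ℤ) (hl : l ≠ []) :
    hjNum (blowupR l) = 2 * (hjNum l + hjDen l) - (hjNum l.dropLast + hjDen l.dropLast) ∧
    hjDen (blowupR l) = 2 * hjDen l - hjDen l.dropLast := by
  obtain ⟨h1, h2, h3, h4⟩ := hj_headBump l hl
  obtain ⟨h5, h6⟩ := hj_append2 ((l.headI + 1) :: l.tail) (by simp)
  unfold blowupR
  rw [h5, h6, h1, h2, h3, h4]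
  constructor <;> ring

lemma getLastD_mem : ∀ l : List ℤ, l ≠ [] → l.getLastD 0 ∈ l
  | [b], _ => by simp
  | b :: c :: l, _ => by
    have h : (b :: c :: l).getLastD 0 = (c :: l).getLastD 0 := by simp [List.getLastD_cons]
    rw [h]
    exact List.mem_cons_of_mem _ (getLastD_mem (c :: l) (by simp))
  termination_by l => l.length

lemma headI_mem : ∀ l : List ℤ, l ≠ [] → l.headI ∈ l
  | b :: l, _ => by simp

lemma blowupL_mem (l : List ℤ) (hl : l ≠ []) (h2 : ∀ b ∈ l, 2 ≤ b) :
    ∀ x ∈ blowupL l, 2 ≤ x := by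
  intro x hx
  simp only [blowupL, List.mem_cons, List.mem_append, List.mem_singleton] at hx
  rcases hx with h | h | h | h
  · omega
  · exact h2 x (List.dropLast_subset l h)
  · have := h2 _ (getLastD_mem l hl); omega
  · simp at h

lemma blowupR_mem (l : List ℤ) (hl : l ≠ []) (h2 : ∀ b ∈ l, 2 ≤ b) :
    ∀ x ∈ blowupR l, 2 ≤ x := by
  intro x hx
  simp only [blowupR, List.mem_append, List.mem_cons, List.mem_singleton] at hx
  rcases hx with (h | h) | h | h
  · have := h2 _ (headI_mem l hl); omega
  · exact h2 x (List.tail_subset l h)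
  · omega
  · simp at h

/-- Class `T` strings are closed under the two blow-up operations, with the
same `d`. -/
theorem class_T_closed_under_blowups
    (l : List ℤ) (hl : l ≠ []) (h2 : ∀ b ∈ l, 2 ≤ b)
    (d n a : ℕ) (hd : 0 < d) (hn : 2 ≤ n) (ha : 0 < a) (han : a < n)
    (hgcd : Nat.gcd a n = 1)
    (hHJ : HJ l = (d * n ^ 2 : ℚ) / (d * n * a - 1)) :
    (∃ n' a' : ℕ, 2 ≤ n' ∧ 0 < a' ∧ a' < n' ∧ Nat.gcd a' n' = 1 ∧
      HJ (blowupL l) = (d * n' ^ 2 : ℚ) / (d * n' * a' - 1)) ∧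
    (∃ n'' a'' : ℕ, 2 ≤ n'' ∧ 0 < a'' ∧ a'' < n'' ∧ Nat.gcd a'' n'' = 1 ∧
      HJ (blowupR l) = (d * n'' ^ 2 : ℚ) / (d * n'' * a'' - 1)) := by
  obtain ⟨hs1, ht0, hts, hsp, htq, hdiff, hdet, hqp⟩ := hj_inv l hl h2
  obtain ⟨hq1, _⟩ := hj_pos l hl h2
  have hHJ' := HJ_eq l hl h2
  obtain ⟨hbL1, hbL2⟩ := hj_blowupL l hl
  obtain ⟨hbR1, hbR2⟩ := hj_blowupR l hl
  have hEL := HJ_eq (blowupL l) (by simp [blowupL]) (blowupL_mem l hl h2)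
  have hER := HJ_eq (blowupR l) (by simp [blowupR]) (blowupR_mem l hl h2)
  rw [hbL1, hbL2] at hEL
  rw [hbR1, hbR2] at hER
  obtain ⟨p, hpdef⟩ : ∃ x : ℤ, x = hjNum l := ⟨_, rfl⟩
  obtain ⟨q, hqdef⟩ : ∃ x : ℤ, x = hjDen l := ⟨_, rfl⟩
  obtain ⟨s, hsdef⟩ : ∃ x : ℤ, x = hjNum l.dropLast := ⟨_, rfl⟩
  obtain ⟨t, htdef⟩ : ∃ x : ℤ, x = hjDen l.dropLast := ⟨_, rfl⟩
  simp only [← hpdef, ← hqdef, ← hsdef, ← htdef] at hs1 ht0 hts hsp htq hdiff hdet hqp hq1 hHJ' hEL hER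
  have hd' : (1:ℤ) ≤ (d:ℤ) := by exact_mod_cast hd
  have hn' : (2:ℤ) ≤ (n:ℤ) := by exact_mod_cast hn
  have ha' : (1:ℤ) ≤ (a:ℤ) := by exact_mod_cast ha
  have han' : (a:ℤ) < (n:ℤ) := by exact_mod_cast han
  have hA0 : (0:ℤ) < (d:ℤ) * n ^ 2 := by positivity
  have hdn : (2:ℤ) ≤ (d:ℤ) * n := by
    have h := mul_le_mul hd' hn' (by norm_num) (by linarith)
    linarith
  have hdnapos : (0:ℤ) < (d:ℤ) * n * (a:ℤ) := by positivity
  have hB0 : (0:ℤ) < (d:ℤ) * n * a - 1 := by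
    have h := mul_le_mul hdn ha' (by norm_num) (by linarith)
    linarith
  have hq0 : (0:ℤ) < q := by omega
  have hp0 : (0:ℤ) < p := by omega
  -- identify p and q
  have hcross : p * ((d:ℤ) * n * a - 1) = (d:ℤ) * n ^ 2 * q := by
    have hEq : (p:ℚ) / (q:ℚ) = (((d:ℤ) * n ^ 2 : ℤ):ℚ) / (((d:ℤ) * n * a - 1 : ℤ):ℚ) := by
      rw [← hHJ', hHJ]; push_cast; ring_nf
    rw [div_eq_div_iff (by exact_mod_cast hq0.ne') (by exact_mod_cast hB0.ne')] at hEq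
    exact_mod_cast hEq
  have hcop_pq : IsCoprime p q := ⟨-t, s, by linear_combination hdet⟩
  have hcop_AB : IsCoprime ((d:ℤ) * n ^ 2) ((d:ℤ) * n * a - 1) :=
    ⟨(d:ℤ) * a ^ 2, -((d:ℤ) * n * a + 1), by ring⟩
  have hpA : p = (d:ℤ) * n ^ 2 := by
    refine Int.dvd_antisymm hp0.le hA0.le ?_ ?_
    · exact hcop_pq.dvd_of_dvd_mul_right ⟨(d:ℤ) * n * a - 1, hcross.symm⟩
    · exact hcop_AB.dvd_of_dvd_mul_right ⟨q, hcross⟩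
  have hqB : q = (d:ℤ) * n * a - 1 := by
    have h' := hcross
    rw [hpA] at h'
    exact (mul_left_cancel₀ hA0.ne' (by linarith)).symm
  -- identify s and t
  have hdet₀ : ((d:ℤ) * n * n - (d:ℤ) * n * a - 1) * q - p * ((d:ℤ) * a * n - (d:ℤ) * a * a - 1) = 1 := by
    rw [hpA, hqB]; ring
  have hkey : (s - ((d:ℤ) * n * n - (d:ℤ) * n * a - 1)) * q
      = p * (t - ((d:ℤ) * a * n - (d:ℤ) * a * a - 1)) := by
    linear_combination hdet - hdet₀
  have hna : (1:ℤ) ≤ (n:ℤ) - (a:ℤ) := by omega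
  have hdna : (2:ℤ) ≤ (d:ℤ) * n * ((n:ℤ) - (a:ℤ)) := by
    have h := mul_le_mul hdn hna (by norm_num) (by positivity)
    linarith
  have hs₀1 : (1:ℤ) ≤ (d:ℤ) * n * n - (d:ℤ) * n * a - 1 := by
    have hexp : (d:ℤ) * n * ((n:ℤ) - (a:ℤ)) = (d:ℤ) * n * n - (d:ℤ) * n * a := by ring
    linarith [hdna, hexp]
  have hs₀p : (d:ℤ) * n * n - (d:ℤ) * n * a - 1 < p := by
    have hsq : (d:ℤ) * n ^ 2 = (d:ℤ) * n * n := by ring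
    rw [hpA, hsq]
    linarith [hdnapos]
  have hss : s = (d:ℤ) * n * n - (d:ℤ) * n * a - 1 := by
    obtain ⟨k, hk⟩ := hcop_pq.dvd_of_dvd_mul_right
      ⟨t - ((d:ℤ) * a * n - (d:ℤ) * a * a - 1), hkey⟩
    have hk1 : k < 1 := lt_of_mul_lt_mul_left
      (by rw [mul_one]; omega : p * k < p * 1) hp0.le
    have hk2 : (-1 : ℤ) < k := lt_of_mul_lt_mul_left
      (by rw [mul_neg_one]; omega : p * (-1) < p * k) hp0.le
    have hk0 : k = 0 := by omega
    rw [hk0, mul_zero] at hk; omega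
  have htt : t = (d:ℤ) * a * n - (d:ℤ) * a * a - 1 := by
    have h0 : p * (t - ((d:ℤ) * a * n - (d:ℤ) * a * a - 1)) = 0 := by
      rw [← hkey, hss]; ring
    rcases mul_eq_zero.mp h0 with h | h
    · omega
    · omega
  rw [hss, htt, hpA, hqB] at hEL hER
  constructor
  · refine ⟨2 * n - a, n, by omega, by omega, by omega, ?_, ?_⟩
    · have hg1 : Nat.gcd n (2 * n - a) ∣ n := Nat.gcd_dvd_left _ _
      have hg2 : Nat.gcd n (2 * n - a) ∣ 2 * n - a := Nat.gcd_dvd_right _ _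
      have hg3 : Nat.gcd n (2 * n - a) ∣ 2 * n := Dvd.dvd.mul_left hg1 2
      have hg4 : Nat.gcd n (2 * n - a) ∣ a := by
        have h := Nat.dvd_sub hg3 hg2
        rwa [show 2 * n - (2 * n - a) = a by omega] at h
      have h1 : Nat.gcd n (2 * n - a) ∣ 1 := hgcd ▸ Nat.dvd_gcd hg4 hg1
      exact Nat.dvd_one.mp h1
    · rw [hEL]
      have e1 : ((2 * ((d:ℤ) * n ^ 2 + ((d:ℤ) * n * n - (d:ℤ) * n * a - 1))
          - ((d:ℤ) * n * a - 1 + ((d:ℤ) * a * n - (d:ℤ) * a * a - 1)) : ℤ) : ℚ)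
          = (d : ℚ) * ((2 * n - a : ℕ) : ℚ) ^ 2 := by
        push_cast [Nat.cast_sub (show a ≤ 2 * n by omega)]
        ring
      have e2 : (((d:ℤ) * n ^ 2 + ((d:ℤ) * n * n - (d:ℤ) * n * a - 1) : ℤ) : ℚ)
          = (d : ℚ) * ((2 * n - a : ℕ) : ℚ) * (n : ℚ) - 1 := by
        push_cast [Nat.cast_sub (show a ≤ 2 * n by omega)]
        ring
      rw [e1, e2]
  · refine ⟨n + a, a, by omega, by omega, by omega, ?_, ?_⟩
    · have hg1 : Nat.gcd a (n + a) ∣ a := Nat.gcd_dvd_left _ _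
      have hg2 : Nat.gcd a (n + a) ∣ n + a := Nat.gcd_dvd_right _ _
      have hg4 : Nat.gcd a (n + a) ∣ n := by
        have h := Nat.dvd_sub hg2 hg1
        rwa [show n + a - a = n by omega] at h
      have h1 : Nat.gcd a (n + a) ∣ 1 := hgcd ▸ Nat.dvd_gcd hg1 hg4
      exact Nat.dvd_one.mp h1
    · rw [hER]
      have e1 : ((2 * ((d:ℤ) * n ^ 2 + ((d:ℤ) * n * a - 1))
          - (((d:ℤ) * n * n - (d:ℤ) * n * a - 1) + ((d:ℤ) * a * n - (d:ℤ) * a * a - 1)) : ℤ) : ℚ)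
          = (d : ℚ) * ((n + a : ℕ) : ℚ) ^ 2 := by
        push_cast
        ring
      have e2 : ((2 * ((d:ℤ) * n * a - 1) - ((d:ℤ) * a * n - (d:ℤ) * a * a - 1) : ℤ) : ℚ)
          = (d : ℚ) * ((n + a : ℕ) : ℚ) * (a : ℚ) - 1 := by
        push_cast
        ring
      rw [e1, e2]
end

section
/- Let T be the smallest set of nonempty integer lists such that: [4] ∈ T; for every m ≥ 0 the list [3, 2, …, 2, 3] with m twos is in T; and whenever [b₁,…,b_r] ∈ T, both [2, b₁, …, b_{r−1}, b_r + 1] and [b₁ + 1, b₂, …, b_r, 2] are in T. Then every list [b₁,…,b_r] of integers, each ≥ 2, satisfying HJ([b₁,…,b_r]) = dn²/(dna − 1) for some positive integers d, n, a with n ≥ 2, 0 < a < n and gcd(a, n) = 1, belongs to T. (Every singularity of class T that is not a rational double point is obtained from the basic strings by iterating the two operations.) -/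
/-- The smallest set of integer lists containing `[4]` and all strings
`[3, 2, …, 2, 3]`, and closed under the two blow-up operations
`[b₁,…,b_r] ↦ [2, b₁, …, b_{r−1}, b_r + 1]` and
`[b₁,…,b_r] ↦ [b₁ + 1, b₂, …, b_r, 2]`. -/
inductive TGen : List ℤ → Prop
  | base : TGen [4]
  | chain (m : ℕ) : TGen (3 :: (List.replicate m 2 ++ [3]))
  | left {l : List ℤ} : TGen l → TGen (2 :: (l.dropLast ++ [l.getLastD 0 + 1]))
  | right {l : List ℤ} : TGen l → TGen (((l.headI + 1) :: l.tail) ++ [2])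


def cf : List ℤ → ℤ × ℤ × ℤ × ℤ
  | [] => (1, 0, 0, -1)
  | b :: l => (b * (cf l).1 - (cf l).2.1, (cf l).1,
               b * (cf l).2.2.1 - (cf l).2.2.2, (cf l).2.2.1)

@[simp] lemma cf_nil : cf [] = (1, 0, 0, -1) := rfl

@[simp] lemma cf_cons (b : ℤ) (l : List ℤ) :
    cf (b :: l) = (b * (cf l).1 - (cf l).2.1, (cf l).1,
               b * (cf l).2.2.1 - (cf l).2.2.2, (cf l).2.2.1) := rfl

lemma cf_det (l : List ℤ) : (cf l).2.1 * (cf l).2.2.1 - (cf l).1 * (cf l).2.2.2 = 1 := by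
  induction l with
  | nil => simp
  | cons b l ih => simp only [cf_cons]; ring_nf; ring_nf at ih; linarith

lemma cf_append (l : List ℤ) (c : ℤ) :
    cf (l ++ [c]) = (c * (cf l).1 - (cf l).2.2.1, c * (cf l).2.1 - (cf l).2.2.2,
      (cf l).1, (cf l).2.1) := by
  induction l with
  | nil => simp [cf]
  | cons b l ih => simp only [List.cons_append, cf_cons, ih]; ring_nf

lemma cf_reverse (l : List ℤ) :
    cf l.reverse = ((cf l).1, (cf l).2.2.1, (cf l).2.1, (cf l).2.2.2) := by
  induction l with
  | nil => simp
  | cons b l ih => simp [cf_append, ih]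

lemma cf_bounds (l : List ℤ) (h2 : ∀ b ∈ l, 2 ≤ b) :
    0 ≤ (cf l).2.1 ∧ (cf l).2.1 < (cf l).1 := by
  induction l with
  | nil => simp
  | cons b l ih =>
    obtain ⟨h0, h1⟩ := ih (fun x hx => h2 x (List.mem_cons_of_mem _ hx))
    have hb : 2 ≤ b := h2 b List.mem_cons_self
    simp only [cf_cons]
    constructor
    · linarith
    · nlinarith

lemma cfQ_pos (l : List ℤ) (hne : l ≠ []) (h2 : ∀ b ∈ l, 2 ≤ b) : 1 ≤ (cf l).2.1 := by
  cases l with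
  | nil => exact absurd rfl hne
  | cons b t =>
    have := cf_bounds t (fun x hx => h2 x (List.mem_cons_of_mem _ hx))
    simp only [cf_cons]
    omega

lemma HJ_eq_s17 (l : List ℤ) (hne : l ≠ []) (h2 : ∀ b ∈ l, 2 ≤ b) :
    HJ l = ((cf l).1 : ℚ) / ((cf l).2.1 : ℚ) := by
  induction l with
  | nil => exact absurd rfl hne
  | cons b t ih =>
    cases t with
    | nil => simp [HJ, cf]
    | cons c u =>
      have h2t : ∀ x ∈ c :: u, 2 ≤ x := fun x hx => h2 x (List.mem_cons_of_mem _ hx)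
      have ht := ih (by simp) h2t
      have hb := cf_bounds (c :: u) h2t
      have hq : 1 ≤ (cf (c :: u)).2.1 := by
        have := cf_bounds u (fun x hx => h2t x (List.mem_cons_of_mem _ hx))
        simp only [cf_cons]; omega
      have hp : (0:ℚ) < ((cf (c :: u)).1 : ℚ) := by exact_mod_cast lt_of_le_of_lt hb.1 hb.2
      have hq' : (0:ℚ) < ((cf (c :: u)).2.1 : ℚ) := by exact_mod_cast hq
      show (b : ℚ) - 1 / HJ (c :: u) = ((cf (b::c::u)).1 : ℚ) / ((cf (b::c::u)).2.1 : ℚ)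
      rw [ht]
      have e1 : (cf (b::c::u)).1 = b * (cf (c :: u)).1 - (cf (c :: u)).2.1 := rfl
      have e2 : (cf (b::c::u)).2.1 = (cf (c :: u)).1 := rfl
      rw [e1, e2]
      set p := (cf (c :: u)).1 with hp0
      set q := (cf (c :: u)).2.1 with hq0
      have hp' : (p:ℚ) ≠ 0 := ne_of_gt hp
      have hq'' : (q:ℚ) ≠ 0 := ne_of_gt hq'
      push_cast
      field_simp

lemma head_eq_two (v : ℤ) (u : List ℤ) (h2 : ∀ b ∈ v :: u, 2 ≤ b)
    (h : (cf (v :: u)).1 ≤ 2 * (cf (v :: u)).2.1) : v = 2 := by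
  have hb := cf_bounds u (fun x hx => h2 x (List.mem_cons_of_mem _ hx))
  have hv : 2 ≤ v := h2 v List.mem_cons_self
  simp only [cf_cons] at h
  nlinarith [hb.1, hb.2]

lemma three_le_head (v : ℤ) (u : List ℤ) (h2 : ∀ b ∈ v :: u, 2 ≤ b)
    (h : 2 * (cf (v :: u)).2.1 < (cf (v :: u)).1) : 3 ≤ v := by
  have hb := cf_bounds u (fun x hx => h2 x (List.mem_cons_of_mem _ hx))
  have hv : 2 ≤ v := h2 v List.mem_cons_self
  simp only [cf_cons] at h
  nlinarith [hb.1, hb.2]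

lemma cf_inj (l₁ : List ℤ) : ∀ l₂ : List ℤ, (∀ b ∈ l₁, 2 ≤ b) → (∀ b ∈ l₂, 2 ≤ b) →
    (cf l₁).1 = (cf l₂).1 → (cf l₁).2.1 = (cf l₂).2.1 → l₁ = l₂ := by
  induction l₁ with
  | nil =>
    intro l₂ _ h2 _ hQ
    cases l₂ with
    | nil => rfl
    | cons c u =>
      have := cfQ_pos (c :: u) (by simp) h2
      simp only [cf_nil] at hQ
      omega
  | cons b t ih =>
    intro l₂ h1 h2 hP hQ
    cases l₂ with
    | nil =>
      have := cfQ_pos (b :: t) (by simp) h1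
      simp only [cf_nil] at hQ
      omega
    | cons c u =>
      have h1t : ∀ x ∈ t, 2 ≤ x := fun x hx => h1 x (List.mem_cons_of_mem _ hx)
      have h2u : ∀ x ∈ u, 2 ≤ x := fun x hx => h2 x (List.mem_cons_of_mem _ hx)
      have hbt := cf_bounds t h1t
      have hbu := cf_bounds u h2u
      simp only [cf_cons] at hP hQ
      -- hQ : (cf t).1 = (cf u).1
      have hbc : b = c := by
        have hd : (cf t).1 ∣ ((cf t).2.1 - (cf u).2.1) := ⟨b - c, by rw [hQ] at hP ⊢; linarith⟩
        have h0 : (cf t).2.1 - (cf u).2.1 = 0 := by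
          apply Int.eq_zero_of_abs_lt_dvd hd
          rw [abs_lt]
          omega
        have hpt : 0 < (cf t).1 := by omega
        have hz : (b - c) * (cf t).1 = 0 := by rw [← hQ] at hP; linarith
        rcases mul_eq_zero.1 hz with h | h
        · omega
        · omega
      subst hbc
      have hqq : (cf t).2.1 = (cf u).2.1 := by rw [← hQ] at hP; linarith
      rw [ih u h1t h2u hQ hqq]

lemma coprime_PQ (l : List ℤ) : IsCoprime (cf l).1 (cf l).2.1 :=
  ⟨-(cf l).2.2.2, (cf l).2.2.1, by have := cf_det l; linarith⟩

lemma S_eq (l : List ℤ) (hne : l ≠ []) (h2 : ∀ b ∈ l, 2 ≤ b)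
    (hdvd : (cf l).1 ∣ ((cf l).2.1 + 1) ^ 2) (hQP : (cf l).2.1 + 3 ≤ (cf l).1) :
    (cf l).2.2.1 = (cf l).1 - 2 - (cf l).2.1 := by
  set P := (cf l).1 with hP
  set Q := (cf l).2.1 with hQ
  set S := (cf l).2.2.1 with hS
  set T := (cf l).2.2.2 with hT
  have hdet : Q * S - P * T = 1 := cf_det l
  obtain ⟨k, hk⟩ := hdvd
  have h2r : ∀ b ∈ l.reverse, 2 ≤ b := fun x hx => h2 x (List.mem_reverse.1 hx)
  have hSb : 1 ≤ S ∧ S < P := by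
    have h1 := cfQ_pos l.reverse (by simpa using hne) h2r
    have h2' := (cf_bounds l.reverse h2r).2
    rw [cf_reverse l] at h1 h2'
    exact ⟨h1, h2'⟩
  have hQ1 : 1 ≤ Q := cfQ_pos l hne h2
  -- Q * (S - (P - 2 - Q)) = P * (T - Q + k)
  have hdd : P ∣ Q * (S - (P - 2 - Q)) := ⟨T - Q + k, by linear_combination hdet + hk⟩
  have hcop : IsCoprime P Q := coprime_PQ l
  have hdd2 : P ∣ (S - (P - 2 - Q)) := hcop.dvd_of_dvd_mul_left hdd
  have h0 : S - (P - 2 - Q) = 0 := by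
    apply Int.eq_zero_of_abs_lt_dvd hdd2
    rw [abs_lt]
    omega
  omega

lemma TGen_reverse {l : List ℤ} (h : TGen l) : TGen l.reverse := by
  induction h with
  | base => exact TGen.base
  | chain m =>
    simpa [List.reverse_cons, List.reverse_append, List.reverse_replicate]
      using TGen.chain m
  | @left l _ ih =>
    have hrw : (2 :: (l.dropLast ++ [l.getLastD 0 + 1])).reverse
        = ((l.reverse.headI + 1) :: l.reverse.tail) ++ [2] := by
      rcases List.eq_nil_or_concat l with rfl | ⟨A, x, rfl⟩
      · simp
      · simp [List.concat_eq_append, List.dropLast_concat, List.getLastD_concat]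
    rw [hrw]; exact TGen.right ih
  | @right l _ ih =>
    have hrw : (((l.headI + 1) :: l.tail) ++ [2]).reverse
        = 2 :: (l.reverse.dropLast ++ [l.reverse.getLastD 0 + 1]) := by
      cases l with
      | nil => simp
      | cons b t => simp [List.reverse_append, List.dropLast_concat, List.getLastD_concat]
    rw [hrw]; exact TGen.left ih

lemma cf_chain_aux (k : ℕ) :
    cf (List.replicate k 2 ++ [3]) = (2 * (k : ℤ) + 3, 2 * (k : ℤ) + 1, (k : ℤ) + 1, (k : ℤ)) := by
  induction k with
  | zero =>
    show cf [3] = _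
    norm_num [cf]
  | succ n ih =>
    rw [List.replicate_succ, List.cons_append]
    simp only [cf_cons, ih, Prod.ext_iff]
    push_cast
    refine ⟨by ring, by ring, by ring, by ring⟩

lemma PQ_values (l : List ℤ) (hne : l ≠ []) (h2 : ∀ b ∈ l, 2 ≤ b)
    (d n a : ℕ) (hd : 0 < d) (hn : 2 ≤ n) (ha : 0 < a) (han : a < n)
    (hHJ : HJ l = (d * n ^ 2 : ℚ) / (d * n * a - 1)) :
    (cf l).1 = (d : ℤ) * n ^ 2 ∧ (cf l).2.1 = (d : ℤ) * n * a - 1 := by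
  set P := (cf l).1 with hP
  set Q := (cf l).2.1 with hQ
  set A : ℤ := (d : ℤ) * n ^ 2 with hA
  set B : ℤ := (d : ℤ) * n * a - 1 with hB
  have hd' : (1 : ℤ) ≤ d := by exact_mod_cast hd
  have hn' : (2 : ℤ) ≤ n := by exact_mod_cast hn
  have ha' : (1 : ℤ) ≤ a := by exact_mod_cast ha
  have han' : (a : ℤ) < n := by exact_mod_cast han
  have hna : 2 ≤ d * n * a := by
    calc 2 ≤ n := hn
      _ = 1 * n * 1 := by ring
      _ ≤ d * n * a := Nat.mul_le_mul (Nat.mul_le_mul hd le_rfl) ha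
  have hna' : (2 : ℤ) ≤ (d : ℤ) * n * a := by exact_mod_cast hna
  have hB1 : 1 ≤ B := by rw [hB]; omega
  have hA1 : 0 < A := by rw [hA]; positivity
  have hQ1 : 1 ≤ Q := cfQ_pos l hne h2
  have hP1 : 0 < P := lt_of_le_of_lt (cf_bounds l h2).1 (cf_bounds l h2).2
  -- cross multiply
  have hcross : P * B = A * Q := by
    have hq0 : ((cf l).2.1 : ℚ) ≠ 0 := Int.cast_ne_zero.2 (by omega)
    have hb0 : ((d : ℚ) * n * a - 1) ≠ 0 := by
      have h22 : (2 : ℚ) ≤ (d : ℚ) * n * a := by exact_mod_cast hna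
      linarith
    have h1 := hHJ
    rw [HJ_eq_s17 l hne h2, div_eq_div_iff hq0 hb0] at h1
    rw [hP, hQ, hA, hB]
    exact_mod_cast h1
  have hcopAB : IsCoprime A B :=
    ⟨(d : ℤ) * a ^ 2, -((d : ℤ) * n * a + 1), by rw [hA, hB]; ring⟩
  have h1 : P ∣ A := (coprime_PQ l).dvd_of_dvd_mul_right ⟨B, by linarith [hcross]⟩
  have h2' : A ∣ P := hcopAB.dvd_of_dvd_mul_right ⟨Q, hcross.symm ▸ rfl⟩
  have hPA : P = A := Int.dvd_antisymm (le_of_lt hP1) (le_of_lt hA1) h1 h2'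
  refine ⟨hPA, ?_⟩
  have : P * B = P * Q := by rw [hcross, hPA]
  have := mul_left_cancel₀ (ne_of_gt hP1) this
  omega

lemma head2 (r : ℕ) (l : List ℤ) (hlen : l.length ≤ r + 1) (hne : l ≠ [])
    (h2 : ∀ b ∈ l, 2 ≤ b)
    (hQ1 : 1 ≤ (cf l).2.1) (hQP : (cf l).2.1 + 3 ≤ (cf l).1)
    (hdvd : (cf l).1 ∣ ((cf l).2.1 + 1) ^ 2)
    (hC1 : (cf l).1 ≤ 2 * (cf l).2.1) (hC2 : 2 * (cf l).2.2.1 < (cf l).1)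
    (IH : ∀ m : List ℤ, m.length ≤ r → m ≠ [] → (∀ b ∈ m, 2 ≤ b) →
      1 ≤ (cf m).2.1 → (cf m).2.1 + 3 ≤ (cf m).1 → (cf m).1 ∣ ((cf m).2.1 + 1) ^ 2 →
      TGen m) : TGen l := by
  have hS := S_eq l hne h2 hdvd hQP
  obtain ⟨K, hK⟩ := hdvd
  have hdet := cf_det l
  -- destructure l
  rcases l with _ | ⟨b, t⟩
  · exact absurd rfl hne
  have hb : b = 2 := head_eq_two b t h2 hC1
  subst hb
  rcases List.eq_nil_or_concat t with rfl | ⟨u, c, rfl⟩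
  · simp only [cf_cons, cf_nil] at hQP hC1; omega
  rw [List.concat_eq_append] at *
  have h2u : ∀ x ∈ u, 2 ≤ x := fun x hx => h2 x (by simp [hx])
  -- last entry ≥ 3
  have hrev : (2 :: (u ++ [c])).reverse = c :: (u.reverse ++ [2]) := by simp
  have hcfrev := cf_reverse (2 :: (u ++ [c]))
  rw [hrev] at hcfrev
  have hc3 : 3 ≤ c := by
    refine three_le_head c (u.reverse ++ [2]) ?_ ?_
    · intro x hx
      simp only [List.mem_cons, List.mem_append, List.mem_reverse,
        List.mem_singleton] at hx
      rcases hx with rfl | hx | (rfl | hx)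
      · exact h2 x (by simp)
      · exact h2u x hx
      · norm_num
      · exact absurd hx List.not_mem_nil
    · rw [hcfrev]; exact hC2
  -- scalar components
  rcases hu : cf u with ⟨p0, q0, s0, t0⟩
  have e_t : cf (u ++ [c]) = (c*p0 - s0, c*q0 - t0, p0, q0) := by rw [cf_append, hu]
  have e_l : cf (2 :: (u ++ [c]))
      = (2*(c*p0 - s0) - (c*q0 - t0), c*p0 - s0, 2*p0 - q0, p0) := by
    rw [cf_cons, e_t]
  have e_m : cf (u ++ [c-1]) = ((c-1)*p0 - s0, (c-1)*q0 - t0, p0, q0) := by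
    rw [cf_append, hu]
  simp only [e_l] at hQ1 hQP hC1 hC2 hK hS hdet
  set Q : ℤ := c*p0 - s0 with hQdef
  set P : ℤ := 2*(c*p0 - s0) - (c*q0 - t0) with hPdef
  have hP0 : (0:ℤ) < P := by omega
  rw [hS] at hdet
  have hT : p0 = Q - K := by
    have h5 : P * (p0 - (Q - K)) = 0 := by linear_combination -hdet - hK
    rcases mul_eq_zero.1 h5 with h | h
    · omega
    · omega
  have hPm : (cf (u ++ [c-1])).1 = K := by
    rw [e_m]
    show (c-1)*p0 - s0 = K
    have : c*p0 - s0 = Q := rfl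
    linarith [hT]
  have hQm : (cf (u ++ [c-1])).2.1 = 2 * K - Q - 2 := by
    rw [e_m]
    show (c-1)*q0 - t0 = 2 * K - Q - 2
    linarith [hS, hT]
  -- invariant for m
  have hQ3 : 3 ≤ Q := by omega
  have hKQ : K ≤ Q - 1 := by
    by_contra hcon
    push_neg at hcon
    have t1 : (K - Q) * P ≥ 0 := mul_nonneg (by omega) (by omega)
    have t2 : (P - Q - 3) * Q ≥ 0 := mul_nonneg (by omega) (by omega)
    nlinarith [hK, t1, t2, hQ3]
  have hK1 : 1 ≤ 2 * K - Q - 2 := by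
    by_contra hcon
    push_neg at hcon
    have t1 : (Q + 2 - 2*K) * P ≥ 0 := mul_nonneg (by omega) (by omega)
    have t2 : (2*Q - P) * (Q + 2) ≥ 0 := mul_nonneg (by omega) (by omega)
    nlinarith [hK, t1, t2]
  have hdvdm : (cf (u ++ [c - 1])).1 ∣ ((cf (u ++ [c - 1])).2.1 + 1) ^ 2 := by
    rw [hPm, hQm]
    exact ⟨4 * K - 4 * Q - 4 + P, by linear_combination hK⟩
  have h2m : ∀ x ∈ u ++ [c - 1], 2 ≤ x := by
    intro x hx
    simp only [List.mem_append, List.mem_singleton] at hx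
    rcases hx with hx | rfl
    · exact h2u x hx
    · omega
  have hlenm : (u ++ [c - 1]).length ≤ r := by
    have := hlen
    simp only [List.length_cons, List.length_append, List.length_singleton] at this ⊢
    omega
  have hm : TGen (u ++ [c - 1]) := by
    refine IH _ hlenm (by simp) h2m ?_ ?_ hdvdm
    · rw [hQm]; omega
    · rw [hQm, hPm]; omega
  have hfin := TGen.left hm
  rw [List.dropLast_concat, List.getLastD_concat] at hfin
  have hcc : c - 1 + 1 = c := by ring
  rw [hcc] at hfin
  exact hfin

lemma aux : ∀ (r : ℕ) (l : List ℤ), l.length ≤ r → l ≠ [] → (∀ b ∈ l, 2 ≤ b) →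
    1 ≤ (cf l).2.1 → (cf l).2.1 + 3 ≤ (cf l).1 → (cf l).1 ∣ ((cf l).2.1 + 1) ^ 2 →
    TGen l := by
  intro r
  induction r with
  | zero =>
    intro l hlen hne
    exact absurd (List.length_eq_zero_iff.1 (Nat.le_zero.1 hlen)) hne
  | succ r ih =>
    intro l hlen hne h2 hQ1 hQP hdvd
    have hS := S_eq l hne h2 hdvd hQP
    by_cases hC1 : (cf l).1 ≤ 2 * (cf l).2.1
    · by_cases hC2 : 2 * (cf l).2.2.1 < (cf l).1
      · exact head2 r l hlen hne h2 hQ1 hQP hdvd hC1 hC2 ih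
      · push_neg at hC2; omega
    · push_neg at hC1
      by_cases hC2 : 2 * (cf l).2.2.1 < (cf l).1
      · -- both ends ≥ 3 : P ∈ {2Q+1, 2Q+2, 2Q+3}
        obtain ⟨K, hK⟩ := hdvd
        rw [hS] at hC2
        have h3 : (cf l).1 = 2 * (cf l).2.1 + 1 ∨ (cf l).1 = 2 * (cf l).2.1 + 2 ∨
            (cf l).1 = 2 * (cf l).2.1 + 3 := by omega
        rcases h3 with hPe | hPe | hPe
        · exfalso
          have h1 : (cf l).1 * (4 * K - (cf l).1 - 2) = 1 := by
            linear_combination (-4 : ℤ) * hK - ((cf l).1 + 2 * (cf l).2.1 + 3) * hPe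
          have hd1 : (cf l).1 ∣ 1 := ⟨_, h1.symm⟩
          have := Int.le_of_dvd one_pos hd1
          omega
        · -- P = 2Q+2 : basic strings
          have hcop := coprime_PQ l
          have hodd : ¬ (2 : ℤ) ∣ (cf l).2.1 := by
            intro h2d
            have h2P : (2 : ℤ) ∣ (cf l).1 := by omega
            have := hcop.isUnit_of_dvd' h2P h2d
            rw [Int.isUnit_iff] at this
            omega
          rcases eq_or_lt_of_le hQ1 with hQe | hQ3
          · -- Q = 1, l = [4]
            have h4 : l = [4] := by
              apply cf_inj l [4] h2 (by norm_num)
              · show (cf l).1 = (cf [4]).1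
                norm_num [cf]; omega
              · show (cf l).2.1 = (cf [4]).2.1
                norm_num [cf]; omega
            rw [h4]; exact TGen.base
          · -- Q ≥ 3 odd
            have hQ3' : 3 ≤ (cf l).2.1 := by omega
            set m : ℕ := ((cf l).2.1 - 3).toNat / 2 with hm
            have hmz : (cf l).2.1 = 2 * (m : ℤ) + 3 := by
              have h1 : ((cf l).2.1 - 3).toNat % 2 = 0 := by omega
              omega
            have hC : l = 3 :: (List.replicate m 2 ++ [3]) := by
              apply cf_inj l _ h2
              · intro x hx
                simp only [List.mem_cons, List.mem_append,
                  List.mem_singleton] at hx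
                rcases hx with rfl | hx | (rfl | hx)
                · norm_num
                · have := List.eq_of_mem_replicate hx; omega
                · norm_num
                · exact absurd hx List.not_mem_nil
              · show (cf l).1 = (cf (3 :: (List.replicate m 2 ++ [3]))).1
                rw [cf_cons, cf_chain_aux m]
                show (cf l).1 = 3 * (2 * (m:ℤ) + 3) - (2 * (m:ℤ) + 1)
                omega
              · show (cf l).2.1 = (cf (3 :: (List.replicate m 2 ++ [3]))).2.1
                rw [cf_cons, cf_chain_aux m]
                show (cf l).2.1 = 2 * (m:ℤ) + 3
                omega
            rw [hC]; exact TGen.chain m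
        · exfalso
          have h1 : (cf l).1 * (4 * K - (cf l).1 + 2) = 1 := by
            linear_combination (-4 : ℤ) * hK - ((cf l).1 + 2 * (cf l).2.1 + 1) * hPe
          have hd1 : (cf l).1 ∣ 1 := ⟨_, h1.symm⟩
          have := Int.le_of_dvd one_pos hd1
          omega
      · -- head ≥ 3, last = 2 : pass to reverse
        push_neg at hC2
        have hcr := cf_reverse l
        have e1 : (cf l.reverse).1 = (cf l).1 := by rw [hcr]
        have e2 : (cf l.reverse).2.1 = (cf l).2.2.1 := by rw [hcr]
        have e3 : (cf l.reverse).2.2.1 = (cf l).2.1 := by rw [hcr]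
        have h2r : ∀ b ∈ l.reverse, 2 ≤ b := fun x hx => h2 x (List.mem_reverse.1 hx)
        obtain ⟨K, hK⟩ := hdvd
        have hrev : TGen l.reverse := by
          apply head2 r l.reverse (by simpa using hlen) (by simpa using hne) h2r
          · rw [e2]; omega
          · rw [e2, e1]; omega
          · rw [e2, e1, hS]
            exact ⟨K + (cf l).1 - 2 * (cf l).2.1 - 2, by linear_combination hK⟩
          · rw [e2, e1]; omega
          · rw [e3, e1]; omega
          · exact ih
        have := TGen_reverse hrev
        rwa [List.reverse_reverse] at this

/-- Every string of integers `≥ 2` whose Hirzebruch–Jung value has the form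
`dn²/(dna − 1)` is obtained from the basic strings `[4]` and `[3,2,…,2,3]` by
iterating the two blow-up operations. -/
theorem class_T_strings_generated
    (l : List ℤ) (h2 : ∀ b ∈ l, 2 ≤ b)
    (d n a : ℕ) (hd : 0 < d) (hn : 2 ≤ n) (ha : 0 < a) (han : a < n)
    (hgcd : Nat.gcd a n = 1)
    (hHJ : HJ l = (d * n ^ 2 : ℚ) / (d * n * a - 1)) :
    TGen l := by
  have hna : 2 ≤ d * n * a := by
    calc 2 ≤ n := hn
      _ = 1 * n * 1 := by ring
      _ ≤ d * n * a := Nat.mul_le_mul (Nat.mul_le_mul hd le_rfl) ha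
  have hne : l ≠ [] := by
    rintro rfl
    have hA0 : ((d : ℚ) * n ^ 2) ≠ 0 := by positivity
    have hB0 : ((d : ℚ) * n * a - 1) ≠ 0 := by
      have : (2 : ℚ) ≤ (d : ℚ) * n * a := by exact_mod_cast hna
      linarith
    have : HJ [] = 0 := rfl
    rw [this] at hHJ
    exact (div_ne_zero hA0 hB0) hHJ.symm
  obtain ⟨hP, hQ⟩ := PQ_values l hne h2 d n a hd hn ha han hHJ
  have hd' : (1 : ℤ) ≤ d := by exact_mod_cast hd
  have hn' : (2 : ℤ) ≤ n := by exact_mod_cast hn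
  have ha' : (1 : ℤ) ≤ a := by exact_mod_cast ha
  have han' : (a : ℤ) < n := by exact_mod_cast han
  have hna' : (2 : ℤ) ≤ (d : ℤ) * n * a := by exact_mod_cast hna
  apply aux l.length l le_rfl hne h2
  · rw [hQ]; omega
  · rw [hQ, hP]
    have h6 : (d : ℤ) * n * a + 2 ≤ (d : ℤ) * n ^ 2 := by
      have h7 : (d : ℤ) * n * (n - a) ≥ 2 := by
        have h8 : (1 : ℤ) ≤ n - a := by omega
        calc (2:ℤ) ≤ (d : ℤ) * n * 1 := by nlinarith
          _ ≤ (d : ℤ) * n * (n - a) := by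
            apply mul_le_mul_of_nonneg_left h8
            nlinarith
      nlinarith
    omega
  · rw [hQ, hP]
    exact ⟨(d : ℤ) * a ^ 2, by ring⟩
end
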